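/- arXiv:2410.16002 — 7 statements merged into one kernel-verified Lean document; each statement's English description precedes it below -/
import Mathlib

section
/- For finitely generated groups G and G', the set of isomorphism classes of finite quotients of G equals that of G' if and only if the profinite completions of G and G' are isomorphic as topological groups. -/
universe u

open Subgroup

section Basics

variable {G : Type u} [Group G]

lemma myNormal_iInf {ι : Sort*} (f : ι → Subgroup G) (h : ∀ i, (f i).Normal) :
    (⨅ i, f i).Normal :=
  ⟨fun a ha g => Subgroup.mem_iInf.2 fun i => (h i).conj_mem a (Subgroup.mem_iInf.1 ha i) g⟩

/-- map between quotients -/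
def qmap (A B : Subgroup G) [A.Normal] [B.Normal] (h : A ≤ B) : (G ⧸ A) →* (G ⧸ B) :=
  QuotientGroup.map A B (MonoidHom.id G) (by rw [Subgroup.comap_id]; exact h)

@[simp] lemma qmap_mk (A B : Subgroup G) [A.Normal] [B.Normal] (h : A ≤ B) (g : G) :
    qmap A B h (QuotientGroup.mk g) = QuotientGroup.mk g := rfl

lemma qmap_qmap (A B C : Subgroup G) [A.Normal] [B.Normal] [C.Normal]
    (h1 : A ≤ B) (h2 : B ≤ C) (y : G ⧸ A) :
    qmap B C h2 (qmap A B h1 y) = qmap A C (h1.trans h2) y := by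
  obtain ⟨g, rfl⟩ := QuotientGroup.mk_surjective y
  rfl

lemma qmap_self (A : Subgroup G) [A.Normal] (h : A ≤ A) (y : G ⧸ A) :
    qmap A A h y = y := by
  obtain ⟨g, rfl⟩ := QuotientGroup.mk_surjective y
  rfl

/-- The intersection of all normal subgroups of index at most `n`. -/
def KK (G : Type u) [Group G] (n : ℕ) : Subgroup G :=
  ⨅ N : {N : Subgroup G // N.Normal ∧ 0 < N.index ∧ N.index ≤ n}, N.1

instance KK_normal (n : ℕ) : (KK G n).Normal :=
  myNormal_iInf _ fun N => N.2.1

lemma KK_antitone {m n : ℕ} (h : m ≤ n) : KK G n ≤ KK G m := by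
  unfold KK
  exact le_iInf fun N => iInf_le (fun M : {M : Subgroup G // M.Normal ∧ 0 < M.index ∧ M.index ≤ n} => M.1) ⟨N.1, N.2.1, N.2.2.1, N.2.2.2.trans h⟩

lemma KK_le' {N : Subgroup G} (hN : N.Normal) (h0 : 0 < N.index) {n : ℕ} (hn : N.index ≤ n) :
    KK G n ≤ N := by
  unfold KK
  exact iInf_le (fun M : {M : Subgroup G // M.Normal ∧ 0 < M.index ∧ M.index ≤ n} => M.1)
    ⟨N, hN, h0, hn⟩

lemma mem_KK {x : G} {m : ℕ} :
    x ∈ KK G m ↔ ∀ N : Subgroup G, N.Normal → 0 < N.index → N.index ≤ m → x ∈ N := by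
  unfold KK
  rw [Subgroup.mem_iInf]
  exact ⟨fun h N a b c => h ⟨N, a, b, c⟩, fun h N => h N.1 N.2.1 N.2.2.1 N.2.2.2⟩

lemma KK_le {N : Subgroup G} (hN : N.Normal) (hf : N.FiniteIndex) : KK G N.index ≤ N :=
  KK_le' hN (Nat.pos_of_ne_zero hf.index_ne_zero) le_rfl

lemma finite_homs [Group.FG G] (H : Type*) [Group H] [Finite H] : Finite (G →* H) := by
  obtain ⟨S, hS, hfin⟩ := Group.fg_iff.1 ‹Group.FG G›
  haveI : Finite S := hfin
  refine Finite.of_injective (fun f : G →* H => (fun s : S => f s)) ?_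
  intro f g h
  exact MonoidHom.eq_of_eqOn_dense hS fun x hx => congrFun h ⟨x, hx⟩

/-- An auxiliary permutation representation with kernel `N`. -/
noncomputable def toPermFin (N : Subgroup G) [N.Normal] [Finite (G ⧸ N)] (n : ℕ)
    (hn : Nat.card (G ⧸ N) ≤ n) : G →* Equiv.Perm (Fin n) :=
  letI : Fintype (G ⧸ N) := Fintype.ofFinite _
  (Equiv.Perm.viaEmbeddingHom ((Fintype.equivFin (G ⧸ N)).toEmbedding.trans
      (Fin.castLEEmb (le_of_eq_of_le (Nat.card_eq_fintype_card (α := G ⧸ N)).symm hn)))).comp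
    ((MulAction.toPermHom (G ⧸ N) (G ⧸ N)).comp (QuotientGroup.mk' N))

lemma ker_toPermFin (N : Subgroup G) [N.Normal] [Finite (G ⧸ N)] (n : ℕ)
    (hn : Nat.card (G ⧸ N) ≤ n) : (toPermFin N n hn).ker = N := by
  ext x
  rw [MonoidHom.mem_ker, toPermFin]
  simp only [MonoidHom.comp_apply]
  rw [map_eq_one_iff _ (Equiv.Perm.viaEmbeddingHom_injective _),
    map_eq_one_iff _ MulAction.toPerm_injective,
    ← MonoidHom.mem_ker, QuotientGroup.ker_mk']

/-- In a finitely generated group there are finitely many normal subgroups of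
index at most `n`. -/
lemma finite_fam [Group.FG G] (n : ℕ) :
    Finite {N : Subgroup G // N.Normal ∧ 0 < N.index ∧ N.index ≤ n} := by
  haveI : Finite (G →* Equiv.Perm (Fin n)) := finite_homs _
  have key : ∀ N : {N : Subgroup G // N.Normal ∧ 0 < N.index ∧ N.index ≤ n},
      ∃ f : G →* Equiv.Perm (Fin n), f.ker = N.1 := by
    intro N
    haveI : N.1.Normal := N.2.1
    haveI : N.1.FiniteIndex := ⟨N.2.2.1.ne'⟩
    have hn : Nat.card (G ⧸ N.1) ≤ n := N.2.2.2
    exact ⟨toPermFin N.1 n hn, ker_toPermFin N.1 n hn⟩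
  choose f hf using key
  refine Finite.of_injective f fun N M h => ?_
  exact Subtype.ext (by rw [← hf N, ← hf M, h])

instance KK_finiteIndex [Group.FG G] (n : ℕ) : (KK G n).FiniteIndex := by
  haveI := finite_fam (G := G) n
  exact Subgroup.finiteIndex_iInf fun N => ⟨N.2.2.1.ne'⟩

end Basics

section Completion

variable (G : Type u) [Group G]

/-- The index type: finite-index normal subgroups of `G`. -/
def FIN (G : Type u) [Group G] : Type u :=
  {N : Subgroup G // N.Normal ∧ N.FiniteIndex}

instance (N : FIN G) : N.1.Normal := N.2.1

instance (N : FIN G) : TopologicalSpace (G ⧸ N.1) := ⊥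

instance (N : FIN G) : DiscreteTopology (G ⧸ N.1) := ⟨rfl⟩

instance (N : FIN G) : IsTopologicalGroup (G ⧸ N.1) where
  continuous_mul := continuous_of_discreteTopology
  continuous_inv := continuous_of_discreteTopology

/-- The profinite completion of `G`: the subgroup of compatible families in the
product of all the finite quotients of `G`, topologized as a closed subgroup of the
product of the (discrete) finite quotients. -/
def completionSubgroup : Subgroup (∀ N : FIN G, G ⧸ N.1) where
  carrier := {x | ∀ (N M : FIN G) (h : N.1 ≤ M.1),
    QuotientGroup.map N.1 M.1 (MonoidHom.id G)
      (by rw [Subgroup.comap_id]; exact h) (x N) = x M}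
  one_mem' := by
    intro N M h
    simp only [Pi.one_apply, map_one]
  mul_mem' := by
    intro a b ha hb N M h
    simp only [Pi.mul_apply, map_mul, ha N M h, hb N M h]
  inv_mem' := by
    intro a ha N M h
    simp only [Pi.inv_apply, map_inv, ha N M h]

/-- The canonical map from `G` to its profinite completion. -/
def iota : G →* completionSubgroup G where
  toFun g := ⟨fun N => QuotientGroup.mk g, by
    intro N M h
    rfl⟩
  map_one' := by
    apply Subtype.ext
    funext N
    rfl
  map_mul' g h := by
    apply Subtype.ext
    funext N
    rfl

end Completion

section Char

variable {G : Type u} [Group G] {H : Type u} [Group H]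

/-- An isomorphism maps `KK _ m` into `KK _ m`. -/
lemma map_KK_le (e : G ≃* H) (m : ℕ) :
    (KK G m).map e.toMonoidHom ≤ KK H m := by
  unfold KK
  refine le_iInf fun N => ?_
  rw [Subgroup.map_le_iff_le_comap]
  have hidx : (N.1.comap e.toMonoidHom).index = N.1.index :=
    Subgroup.index_comap_of_surjective _ e.surjective
  exact KK_le' (N.2.1.comap _) (by rw [hidx]; exact N.2.2.1) (by rw [hidx]; exact N.2.2.2)

lemma comap_mk'_KK {m n : ℕ} (hmn : m ≤ n) :
    (KK (G ⧸ KK G n) m).comap (QuotientGroup.mk' (KK G n)) = KK G m := by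
  apply le_antisymm
  · refine le_iInf fun N => ?_
    have hker : (QuotientGroup.mk' (KK G n)).ker ≤ N.1 := by
      rw [QuotientGroup.ker_mk']
      exact le_trans (KK_antitone hmn) (KK_le' N.2.1 N.2.2.1 N.2.2.2)
    have hmap : (N.1.map (QuotientGroup.mk' (KK G n))).comap (QuotientGroup.mk' (KK G n)) = N.1 :=
      Subgroup.comap_map_eq_self hker
    have hidx : (N.1.map (QuotientGroup.mk' (KK G n))).index = N.1.index :=
      Subgroup.index_map_eq _ (QuotientGroup.mk'_surjective _) hker
    calc (KK (G ⧸ KK G n) m).comap (QuotientGroup.mk' (KK G n))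
        ≤ (N.1.map (QuotientGroup.mk' (KK G n))).comap (QuotientGroup.mk' (KK G n)) :=
          Subgroup.comap_mono (KK_le' (N.2.1.map _ (QuotientGroup.mk'_surjective _))
            (by rw [hidx]; exact N.2.2.1) (by rw [hidx]; exact N.2.2.2))
      _ = N.1 := hmap
  · intro x hx
    rw [Subgroup.mem_comap, mem_KK]
    intro N' hN h0 hm
    have hidx : (N'.comap (QuotientGroup.mk' (KK G n))).index = N'.index :=
      Subgroup.index_comap_of_surjective _ (QuotientGroup.mk'_surjective _)
    exact KK_le' (hN.comap _) (by rw [hidx]; exact h0) (by rw [hidx]; exact hm) hx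

lemma map_mk'_KK {m n : ℕ} (hmn : m ≤ n) :
    (KK G m).map (QuotientGroup.mk' (KK G n)) = KK (G ⧸ KK G n) m := by
  conv_lhs => rw [← comap_mk'_KK (G := G) hmn]
  exact Subgroup.map_comap_eq_self_of_surjective (QuotientGroup.mk'_surjective _) _

/-- Key fact: an isomorphism of the level-`n` quotients sends the image of `KK G m`
to the image of `KK H m`, for `m ≤ n`. -/
lemma iso_mk_mem {m n : ℕ} (e : (G ⧸ KK G n) ≃* (H ⧸ KK H n)) (hmn : m ≤ n)
    {g : G} (hg : g ∈ KK G m) :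
    e (QuotientGroup.mk g) ∈ (KK H m).map (QuotientGroup.mk' (KK H n)) := by
  rw [map_mk'_KK hmn]
  refine map_KK_le e m ?_
  refine Subgroup.mem_map.2 ?_
  have : (QuotientGroup.mk g : G ⧸ KK G n) ∈ KK (G ⧸ KK G n) m := by
    rw [← map_mk'_KK hmn]
    exact Subgroup.mem_map.2 ⟨g, hg, rfl⟩
  exact ⟨_, this, rfl⟩

end Char

section Descend

variable {G : Type u} [Group G] {H : Type u} [Group H]

/-- Descend an isomorphism of level-`n` quotients to level `m ≤ n`. -/
def descHom {m n : ℕ} (e : (G ⧸ KK G n) ≃* (H ⧸ KK H n)) (hmn : m ≤ n) :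
    (G ⧸ KK G m) →* (H ⧸ KK H m) :=
  QuotientGroup.lift (KK G m)
    ((qmap (KK H n) (KK H m) (KK_antitone hmn)).comp
      (e.toMonoidHom.comp (QuotientGroup.mk' (KK G n))))
    (by
      intro g hg
      obtain ⟨h', hh', heq⟩ := Subgroup.mem_map.1 (iso_mk_mem e hmn hg)
      show qmap (KK H n) (KK H m) (KK_antitone hmn) (e (QuotientGroup.mk g)) = 1
      rw [← heq]
      exact (QuotientGroup.eq_one_iff h').2 hh')

@[simp] lemma descHom_mk {m n : ℕ} (e : (G ⧸ KK G n) ≃* (H ⧸ KK H n)) (hmn : m ≤ n) (g : G) :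
    descHom e hmn (QuotientGroup.mk g)
      = qmap (KK H n) (KK H m) (KK_antitone hmn) (e (QuotientGroup.mk g)) := rfl

/-- Descend an isomorphism of level-`n` quotients to level `m ≤ n`, as an isomorphism. -/
def descIso {m n : ℕ} (e : (G ⧸ KK G n) ≃* (H ⧸ KK H n)) (hmn : m ≤ n) :
    (G ⧸ KK G m) ≃* (H ⧸ KK H m) where
  toFun := descHom e hmn
  invFun := descHom e.symm hmn
  left_inv := by
    intro x
    obtain ⟨g, rfl⟩ := QuotientGroup.mk_surjective x
    obtain ⟨h', hh'⟩ := QuotientGroup.mk_surjective (e (QuotientGroup.mk g))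
    rw [descHom_mk, ← hh', qmap_mk, descHom_mk, hh', MulEquiv.symm_apply_apply, qmap_mk]
  right_inv := by
    intro x
    obtain ⟨g, rfl⟩ := QuotientGroup.mk_surjective x
    obtain ⟨h', hh'⟩ := QuotientGroup.mk_surjective (e.symm (QuotientGroup.mk g))
    rw [descHom_mk, ← hh', qmap_mk, descHom_mk, hh', MulEquiv.apply_symm_apply, qmap_mk]
  map_mul' := map_mul _

@[simp] lemma descIso_mk {m n : ℕ} (e : (G ⧸ KK G n) ≃* (H ⧸ KK H n)) (hmn : m ≤ n) (g : G) :
    descIso e hmn (QuotientGroup.mk g)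
      = qmap (KK H n) (KK H m) (KK_antitone hmn) (e (QuotientGroup.mk g)) := rfl

lemma descIso_self {n : ℕ} (e : (G ⧸ KK G n) ≃* (H ⧸ KK H n)) :
    descIso e (le_refl n) = e := by
  ext x
  obtain ⟨g, rfl⟩ := QuotientGroup.mk_surjective x
  rw [descIso_mk, qmap_self]

lemma descIso_trans {l m n : ℕ} (e : (G ⧸ KK G n) ≃* (H ⧸ KK H n)) (hlm : l ≤ m) (hmn : m ≤ n) :
    descIso (descIso e hmn) hlm = descIso e (hlm.trans hmn) := by
  ext x
  obtain ⟨g, rfl⟩ := QuotientGroup.mk_surjective x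
  rw [descIso_mk, descIso_mk, descIso_mk, qmap_qmap]

end Descend

section Koenig

open CategoryTheory Opposite

variable (G : Type u) [Group G] (G' : Type u) [Group G']

instance finite_mulEquiv (A B : Type*) [Group A] [Group B] [Finite A] [Finite B] :
    Finite (A ≃* B) :=
  Finite.of_injective (fun e => (e : A → B)) fun e f h => MulEquiv.ext (congrFun h)

/-- The inverse system of isomorphisms between the canonical finite quotients. -/
def isoFunctor : ℕᵒᵖ ⥤ Type u where
  obj n := (G ⧸ KK G n.unop) ≃* (G' ⧸ KK G' n.unop)
  map {n m} f := TypeCat.ofHom fun e => descIso e (leOfHom f.unop)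
  map_id n := ConcreteCategory.hom_ext _ _ fun e => descIso_self e
  map_comp {n m l} f g := ConcreteCategory.hom_ext _ _ fun e => (descIso_trans e (leOfHom g.unop) (leOfHom f.unop)).symm

variable [Group.FG G] [Group.FG G']

/-- Transfer a surjection onto the level-`n` quotient across the hypothesis. -/
lemma exists_surj_lift (n : ℕ)
    (hQ : ∃ φ : G' →* (G ⧸ KK G n), Function.Surjective φ) :
    ∃ α : (G' ⧸ KK G' n) →* (G ⧸ KK G n), Function.Surjective α := by
  obtain ⟨φ, hφ⟩ := hQ
  have hker : ∀ x ∈ KK G' n, φ x = 1 := by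
    intro x hx
    obtain ⟨r, hr⟩ := QuotientGroup.mk_surjective (φ x)
    rw [← hr]
    rw [QuotientGroup.eq_one_iff]
    rw [mem_KK]
    intro N hN h0 hm
    haveI : N.Normal := hN
    haveI : N.FiniteIndex := ⟨h0.ne'⟩
    set ψ : G' →* (G ⧸ N) := (qmap (KK G n) N (KK_le' hN h0 hm)).comp φ with hψ
    have h1 : 0 < ψ.ker.index := by
      rw [Subgroup.index_ker]
      exact Nat.card_pos
    have h2 : ψ.ker.index ≤ n := by
      rw [Subgroup.index_ker]
      calc Nat.card ψ.range ≤ Nat.card (G ⧸ N) :=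
            Nat.card_le_card_of_injective _ Subtype.val_injective
        _ = N.index := rfl
        _ ≤ n := hm
    have hx' : x ∈ ψ.ker := KK_le' ψ.normal_ker h1 h2 hx
    have : ψ x = 1 := hx'
    rw [hψ, MonoidHom.comp_apply, ← hr, qmap_mk] at this
    rwa [QuotientGroup.eq_one_iff] at this
  refine ⟨QuotientGroup.lift (KK G' n) φ hker, ?_⟩
  intro y
  obtain ⟨g', hg'⟩ := hφ y
  exact ⟨QuotientGroup.mk g', hg'⟩

lemma nonempty_isoFunctor_obj
    (hQ : ∀ (Q : Type u) [Group Q] [Finite Q],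
      (∃ φ : G →* Q, Function.Surjective φ) ↔ (∃ φ : G' →* Q, Function.Surjective φ))
    (n : ℕ) : Nonempty ((G ⧸ KK G n) ≃* (G' ⧸ KK G' n)) := by
  obtain ⟨α, hα⟩ := exists_surj_lift G G' n
    ((hQ (G ⧸ KK G n)).1 ⟨QuotientGroup.mk' _, QuotientGroup.mk'_surjective _⟩)
  obtain ⟨β, hβ⟩ := exists_surj_lift G' G n
    ((hQ (G' ⧸ KK G' n)).2 ⟨QuotientGroup.mk' _, QuotientGroup.mk'_surjective _⟩)
  have hinj : Function.Injective (⇑β ∘ ⇑α) :=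
    Finite.injective_iff_surjective.2 (hβ.comp hα)
  exact ⟨(MulEquiv.ofBijective α ⟨hinj.of_comp, hα⟩).symm⟩

lemma exists_compatible_isos
    (hQ : ∀ (Q : Type u) [Group Q] [Finite Q],
      (∃ φ : G →* Q, Function.Surjective φ) ↔ (∃ φ : G' →* Q, Function.Surjective φ)) :
    ∃ s : ∀ n : ℕ, (G ⧸ KK G n) ≃* (G' ⧸ KK G' n),
      ∀ (m n : ℕ) (h : m ≤ n), descIso (s n) h = s m := by
  haveI : ∀ j : ℕᵒᵖ, Finite ((isoFunctor G G').obj j) := by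
    intro j
    exact finite_mulEquiv _ _
  haveI : ∀ j : ℕᵒᵖ, Nonempty ((isoFunctor G G').obj j) := by
    intro j
    exact nonempty_isoFunctor_obj G G' hQ j.unop
  obtain ⟨s, hs⟩ := nonempty_sections_of_finite_inverse_system (isoFunctor G G')
  refine ⟨fun n => s (op n), fun m n h => ?_⟩
  exact hs (f := (homOfLE h).op)

end Koenig

section Main

variable (G : Type u) [Group G] (G' : Type u) [Group G']

/-- The canonical finite-index normal subgroups as elements of `FIN`. -/
def FINmk [Group.FG G] (n : ℕ) : FIN G := ⟨KK G n, KK_normal n, KK_finiteIndex n⟩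

lemma descIso_qmap {m n : ℕ} (e : (G ⧸ KK G n) ≃* (G' ⧸ KK G' n)) (hmn : m ≤ n)
    (y : G ⧸ KK G n) :
    descIso e hmn (qmap (KK G n) (KK G m) (KK_antitone hmn) y)
      = qmap (KK G' n) (KK G' m) (KK_antitone hmn) (e y) := by
  obtain ⟨g, rfl⟩ := QuotientGroup.mk_surjective y
  rw [qmap_mk, descIso_mk]

variable [Group.FG G] [Group.FG G']
variable (s : ∀ n : ℕ, (G ⧸ KK G n) ≃* (G' ⧸ KK G' n))

lemma compat_x (x : completionSubgroup G) (N M : FIN G) (h : N.1 ≤ M.1) :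
    qmap N.1 M.1 h (x.1 N) = x.1 M := x.2 N M h

/-- The candidate component of the image of `x` in `G' ⧸ M`. -/
def cval (x : completionSubgroup G) (M : FIN G') (n : ℕ) (hn : KK G' n ≤ M.1) : G' ⧸ M.1 :=
  qmap (KK G' n) M.1 hn ((s n) (x.1 (FINmk G n)))

lemma cval_mono (hs : ∀ (m n : ℕ) (h : m ≤ n), descIso (s n) h = s m)
    (x : completionSubgroup G) (M : FIN G') {m n : ℕ} (hmn : m ≤ n) (hm : KK G' m ≤ M.1) :
    cval G G' s x M n ((KK_antitone hmn).trans hm) = cval G G' s x M m hm := by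
  unfold cval
  erw [← qmap_qmap (KK G' n) (KK G' m) M.1 (KK_antitone hmn) hm, ← descIso_qmap G G' (s n) hmn,
    show (qmap (KK G n) (KK G m) (KK_antitone hmn)) (x.1 (FINmk G n)) = x.1 (FINmk G m) from
      compat_x G x (FINmk G n) (FINmk G m) (KK_antitone hmn), hs m n hmn]

lemma cval_eq (hs : ∀ (m n : ℕ) (h : m ≤ n), descIso (s n) h = s m)
    (x : completionSubgroup G) (M : FIN G') {n₁ n₂ : ℕ}
    (h1 : KK G' n₁ ≤ M.1) (h2 : KK G' n₂ ≤ M.1) :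
    cval G G' s x M n₁ h1 = cval G G' s x M n₂ h2 := by
  have k1 := cval_mono G G' s hs x M (le_max_left n₁ n₂) h1
  have k2 := cval_mono G G' s hs x M (le_max_right n₁ n₂) h2
  rw [← k1, ← k2]

lemma cval_mem (hs : ∀ (m n : ℕ) (h : m ≤ n), descIso (s n) h = s m)
    (x : completionSubgroup G) :
    (fun M : FIN G' => cval G G' s x M M.1.index (KK_le M.2.1 M.2.2))
      ∈ completionSubgroup G' := by
  intro N M h
  show qmap N.1 M.1 h (cval G G' s x N N.1.index (KK_le N.2.1 N.2.2)) = _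
  unfold cval
  rw [qmap_qmap]
  exact cval_eq G G' s hs x M _ (KK_le M.2.1 M.2.2)

/-- The homomorphism between completions induced by a compatible family. -/
noncomputable def buildHom (hs : ∀ (m n : ℕ) (h : m ≤ n), descIso (s n) h = s m) :
    completionSubgroup G →* completionSubgroup G' where
  toFun x := ⟨fun M : FIN G' => cval G G' s x M M.1.index (KK_le M.2.1 M.2.2),
    cval_mem G G' s hs x⟩
  map_one' := by
    apply Subtype.ext
    funext M
    show cval G G' s 1 M _ _ = 1
    unfold cval
    have h1 : (1 : completionSubgroup G).1 (FINmk G M.1.index) = 1 := rfl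
    erw [h1, map_one, map_one]
  map_mul' x y := by
    apply Subtype.ext
    funext M
    show cval G G' s (x * y) M _ _ = _
    unfold cval
    have h1 : (x * y).1 (FINmk G M.1.index)
        = x.1 (FINmk G M.1.index) * y.1 (FINmk G M.1.index) := rfl
    erw [h1, map_mul, map_mul]
    rfl

lemma continuous_buildHom (hs : ∀ (m n : ℕ) (h : m ≤ n), descIso (s n) h = s m) :
    Continuous (buildHom G G' s hs) := by
  refine Continuous.subtype_mk ?_ _
  refine continuous_pi fun M => ?_
  have : (fun x : completionSubgroup G => cval G G' s x M M.1.index (KK_le M.2.1 M.2.2))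
      = (fun y : G ⧸ (FINmk G M.1.index).1 =>
          qmap (KK G' M.1.index) M.1 (KK_le M.2.1 M.2.2) ((s M.1.index) y))
        ∘ (fun x : completionSubgroup G => x.1 (FINmk G M.1.index)) := rfl
  show Continuous (fun x : completionSubgroup G => cval G G' s x M M.1.index (KK_le M.2.1 M.2.2))
  rw [this]
  exact continuous_of_discreteTopology.comp
    ((continuous_apply (FINmk G M.1.index)).comp continuous_subtype_val)

end Main

section Assemble

variable (G : Type u) [Group G] (G' : Type u) [Group G']

lemma descIso_symm {m n : ℕ} (e : (G ⧸ KK G n) ≃* (G' ⧸ KK G' n)) (hmn : m ≤ n) :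
    (descIso e hmn).symm = descIso e.symm hmn := by
  ext x
  rfl

variable [Group.FG G] [Group.FG G']

lemma hs_symm (s : ∀ n : ℕ, (G ⧸ KK G n) ≃* (G' ⧸ KK G' n))
    (hs : ∀ (m n : ℕ) (h : m ≤ n), descIso (s n) h = s m) :
    ∀ (m n : ℕ) (h : m ≤ n), descIso ((s n).symm) h = (s m).symm := by
  intro m n h
  rw [← descIso_symm, hs m n h]

lemma cval_self (s : ∀ n : ℕ, (G ⧸ KK G n) ≃* (G' ⧸ KK G' n)) (n : ℕ)
    (h : KK G' n ≤ (FINmk G' n).1) (x : completionSubgroup G) :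
    cval G G' s x (FINmk G' n) n h = s n (x.1 (FINmk G n)) :=
  qmap_self _ _ _

lemma buildHom_inverse
    (s : ∀ n : ℕ, (G ⧸ KK G n) ≃* (G' ⧸ KK G' n))
    (hs : ∀ (m n : ℕ) (h : m ≤ n), descIso (s n) h = s m)
    (t : ∀ n : ℕ, (G' ⧸ KK G' n) ≃* (G ⧸ KK G n))
    (ht : ∀ (m n : ℕ) (h : m ≤ n), descIso (t n) h = t m)
    (hst : ∀ (n : ℕ) (y : G ⧸ KK G n), t n (s n y) = y)
    (x : completionSubgroup G) :
    buildHom G' G t ht (buildHom G G' s hs x) = x := by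
  apply Subtype.ext
  funext N
  show cval G' G t (buildHom G G' s hs x) N N.1.index (KK_le N.2.1 N.2.2) = x.1 N
  unfold cval
  have h0 : (buildHom G G' s hs x).1 (FINmk G' N.1.index)
      = cval G G' s x (FINmk G' N.1.index) (KK G' N.1.index).index
          (KK_le (KK_normal _) (KK_finiteIndex _)) := rfl
  erw [h0, cval_eq G G' s hs x (FINmk G' N.1.index) _ (le_refl (KK G' N.1.index)),
    cval_self G G' s N.1.index _ x, hst]
  exact show (qmap (KK G N.1.index) N.1 (KK_le N.2.1 N.2.2)) (x.1 (FINmk G N.1.index)) = x.1 N from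
    compat_x G x (FINmk G N.1.index) N (KK_le N.2.1 N.2.2)

/-- The topological isomorphism of completions induced by a compatible family. -/
noncomputable def buildEquiv
    (s : ∀ n : ℕ, (G ⧸ KK G n) ≃* (G' ⧸ KK G' n))
    (hs : ∀ (m n : ℕ) (h : m ≤ n), descIso (s n) h = s m) :
    completionSubgroup G ≃* completionSubgroup G' where
  toFun := buildHom G G' s hs
  invFun := buildHom G' G (fun n => (s n).symm) (hs_symm G G' s hs)
  left_inv := buildHom_inverse G G' s hs _ (hs_symm G G' s hs)
    (fun n y => (s n).symm_apply_apply y)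
  right_inv := buildHom_inverse G' G (fun n => (s n).symm) (hs_symm G G' s hs) s hs
    (fun n y => (s n).apply_symm_apply y)
  map_mul' := map_mul _

end Assemble

section Density

variable (G : Type u) [Group G]

lemma denseRange_iota : DenseRange (⇑(iota G)) := by
  intro x
  rw [mem_closure_iff]
  intro o ho hxo
  rw [isOpen_induced_iff] at ho
  obtain ⟨V, hV, rfl⟩ := ho
  rw [isOpen_pi_iff] at hV
  obtain ⟨I, uu, h1, h2⟩ := hV x.1 hxo
  have hNor : (⨅ N ∈ I, (N : FIN G).1).Normal :=
    myNormal_iInf _ fun N => myNormal_iInf _ fun _ => N.2.1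
  have hFI : (⨅ N ∈ I, (N : FIN G).1).FiniteIndex :=
    Subgroup.finiteIndex_iInf' _ fun N _ => N.2.2
  set N0 : FIN G := ⟨⨅ N ∈ I, (N : FIN G).1, hNor, hFI⟩ with hN0
  obtain ⟨g, hg⟩ := QuotientGroup.mk_surjective (x.1 N0)
  refine ⟨iota G g, ?_, Set.mem_range_self g⟩
  refine h2 ?_
  intro N hN
  have hle : N0.1 ≤ N.1 := biInf_le (fun M : FIN G => M.1) hN
  have hc : qmap N0.1 N.1 hle (x.1 N0) = x.1 N := x.2 N0 N hle
  rw [← hg, qmap_mk] at hc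
  have : (iota G g).1 N = QuotientGroup.mk g := rfl
  rw [this, hc]
  exact (h1 N hN).2

lemma proj_surjective_of_dense {G' : Type u} [Group G']
    (Φ : completionSubgroup G' →* completionSubgroup G)
    (hc : Continuous Φ) (hsurj : Function.Surjective Φ) (N : FIN G) :
    Function.Surjective (fun g' : G' => (Φ (iota G' g')).1 N) := by
  set projN : completionSubgroup G →* G ⧸ N.1 :=
    (Pi.evalMonoidHom (fun M : FIN G => G ⧸ M.1) N).comp (completionSubgroup G).subtype
    with hprojN
  have hpc : Continuous projN := (continuous_apply N).comp continuous_subtype_val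
  have hps : Function.Surjective projN := by
    intro y
    obtain ⟨g, rfl⟩ := QuotientGroup.mk_surjective y
    exact ⟨iota G g, rfl⟩
  have hdr : DenseRange ((⇑projN ∘ ⇑Φ) ∘ ⇑(iota G')) := by
    refine DenseRange.comp ?_ (denseRange_iota G') (hpc.comp hc)
    exact (hps.comp hsurj).denseRange
  have hrange : Set.range ((⇑projN ∘ ⇑Φ) ∘ ⇑(iota G')) = Set.univ := by
    have := hdr.closure_eq
    rwa [IsClosed.closure_eq (isClosed_discrete _)] at this
  exact Set.range_eq_univ.1 hrange

lemma transfer_surjection {G' : Type u} [Group G']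
    (Φ : completionSubgroup G' →* completionSubgroup G)
    (hc : Continuous Φ) (hsurj : Function.Surjective Φ)
    {Q : Type u} [Group Q] [Finite Q] (φ : G →* Q) (hφ : Function.Surjective φ) :
    ∃ ψ : G' →* Q, Function.Surjective ψ := by
  haveI : Finite (G ⧸ φ.ker) :=
    Finite.of_equiv Q (QuotientGroup.quotientKerEquivOfSurjective φ hφ).toEquiv.symm
  haveI : φ.ker.FiniteIndex := Subgroup.finiteIndex_of_finite_quotient
  have key := proj_surjective_of_dense G Φ hc hsurj
    ⟨φ.ker, MonoidHom.normal_ker φ, inferInstance⟩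
  let κ : (G ⧸ φ.ker) ≃* Q := QuotientGroup.quotientKerEquivOfSurjective φ hφ
  refine ⟨κ.toMonoidHom.comp
    (((Pi.evalMonoidHom (fun M : FIN G => G ⧸ M.1)
          ⟨φ.ker, MonoidHom.normal_ker φ, inferInstance⟩).comp
        (completionSubgroup G).subtype).comp (Φ.comp (iota G'))), ?_⟩
  intro q
  obtain ⟨g', hg'⟩ := key (κ.symm q)
  refine ⟨g', ?_⟩
  show κ ((Φ (iota G' g')).1 ⟨φ.ker, MonoidHom.normal_ker φ, inferInstance⟩) = q
  have h2 : (Φ (iota G' g')).1 ⟨φ.ker, MonoidHom.normal_ker φ, inferInstance⟩ = κ.symm q := hg'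
  rw [h2, MulEquiv.apply_symm_apply]

end Density

/-- For finitely generated groups `G` and `G'`, the collections of
isomorphism classes of finite quotients coincide if and only if the profinite
completions are isomorphic as topological groups. -/
theorem finite_quotients_eq_iff_profinite_completions_iso
    (G G' : Type u) [Group G] [Group G'] [Group.FG G] [Group.FG G'] :
    (∀ (Q : Type u) [Group Q] [Finite Q],
        (∃ φ : G →* Q, Function.Surjective φ) ↔ (∃ φ : G' →* Q, Function.Surjective φ))
    ↔ ∃ e : completionSubgroup G ≃* completionSubgroup G',
        Continuous (⇑e) ∧ Continuous (⇑e.symm) := by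
  constructor
  · intro hQ
    obtain ⟨s, hs⟩ := exists_compatible_isos G G' hQ
    refine ⟨buildEquiv G G' s hs, ?_, ?_⟩
    · exact continuous_buildHom G G' s hs
    · exact continuous_buildHom G' G _ (hs_symm G G' s hs)
  · rintro ⟨e, he, he'⟩ Q _ _
    constructor
    · rintro ⟨φ, hφ⟩
      exact transfer_surjection G e.symm.toMonoidHom he' e.symm.surjective φ hφ
    · rintro ⟨φ, hφ⟩
      exact transfer_surjection G' e.toMonoidHom he e.surjective φ hφ
end

section
/- The profinite completion functor is right exact: given a short exact sequence of groups 1 → K → G → L → 1, the induced sequence of profinite completions K̂ → Ĝ → L̂ → 1 is exact, i.e. the image of K̂ in Ĝ is a normal subgroup whose quotient is isomorphic to L̂. -/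
universe u

section CompletionMap

variable {G H : Type u} [Group G] [Group H]

/-- Pulling back a finite-index normal subgroup along a homomorphism. -/
def comapFIN (f : G →* H) (M : FIN H) : FIN G :=
  ⟨M.1.comap f, M.2.1.comap f, by
    have hker : M.1.comap f = ((QuotientGroup.mk' M.1).comp f).ker := by
      rw [← MonoidHom.comap_ker, QuotientGroup.ker_mk']
    rw [hker]
    haveI : M.1.FiniteIndex := M.2.2
    haveI : Finite (H ⧸ M.1) := Subgroup.finite_quotient_of_finiteIndex
    haveI : Finite (((QuotientGroup.mk' M.1).comp f).range) := Subtype.finite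
    exact Subgroup.finiteIndex_ker _⟩

/-- Functoriality of the profinite completion: the homomorphism between
profinite completions induced by a homomorphism of groups. -/
def completionMap (f : G →* H) : completionSubgroup G →* completionSubgroup H where
  toFun x := ⟨fun M => QuotientGroup.map (comapFIN f M).1 M.1 f le_rfl (x.1 (comapFIN f M)), by
    intro M M' h
    have hc : (comapFIN f M).1 ≤ (comapFIN f M').1 := Subgroup.comap_mono h
    dsimp only
    rw [← x.2 (comapFIN f M) (comapFIN f M') hc]
    induction x.1 (comapFIN f M) using QuotientGroup.induction_on with
    | H g => rfl⟩
  map_one' := by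
    apply Subtype.ext
    funext M
    simp only [OneMemClass.coe_one, Pi.one_apply, map_one]
  map_mul' x y := by
    apply Subtype.ext
    funext M
    simp only [MulMemClass.coe_mul, Pi.mul_apply, map_mul]

end CompletionMap

section Aux

variable {G H : Type u} [Group G] [Group H]

instance finQuotFinite (N : FIN G) : Finite (G ⧸ N.1) :=
  haveI := N.2.2
  Subgroup.finite_quotient_of_finiteIndex

/-- A common lower bound for finitely many finite-index normal subgroups. -/
lemma FIN.exists_lb (I : Finset (FIN G)) : ∃ P : FIN G, ∀ N ∈ I, P.1 ≤ N.1 := by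
  classical
  induction I using Finset.induction with
  | empty => exact ⟨⟨⊤, inferInstance, inferInstance⟩, by simp⟩
  | @insert N I hNI ih =>
    obtain ⟨P, hP⟩ := ih
    haveI := N.2.1; haveI := N.2.2; haveI := P.2.1; haveI := P.2.2
    refine ⟨⟨N.1 ⊓ P.1, inferInstance, inferInstance⟩, ?_⟩
    intro M hM
    rcases Finset.mem_insert.mp hM with h | h
    · exact h ▸ inf_le_left
    · exact le_trans inf_le_right (hP M h)

lemma agree_of_agree_le (x y : completionSubgroup G) (P N : FIN G) (h : P.1 ≤ N.1)
    (hxy : x.1 P = y.1 P) : x.1 N = y.1 N := by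
  rw [← x.2 P N h, ← y.2 P N h, hxy]

lemma isClosed_completionSubgroup :
    IsClosed ((completionSubgroup G : Set (∀ N : FIN G, G ⧸ N.1))) := by
  have heq : (completionSubgroup G : Set (∀ N : FIN G, G ⧸ N.1)) =
      ⋂ (N : FIN G) (M : FIN G) (h : N.1 ≤ M.1),
        {x | QuotientGroup.map N.1 M.1 (MonoidHom.id G)
          (by rw [Subgroup.comap_id]; exact h) (x N) = x M} := by
    ext x
    simp only [Set.mem_iInter, Set.mem_setOf_eq]
    rfl
  rw [heq]
  refine isClosed_iInter fun N => isClosed_iInter fun M => isClosed_iInter fun h => ?_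
  exact isClosed_eq (Continuous.comp continuous_of_discreteTopology (continuous_apply N))
    (continuous_apply M)

instance : CompactSpace (completionSubgroup G) :=
  isCompact_iff_compactSpace.mp (isClosed_completionSubgroup.isCompact)

lemma continuous_completionMap (f : G →* H) : Continuous (completionMap f) := by
  apply Continuous.subtype_mk
  apply continuous_pi
  intro M
  exact Continuous.comp continuous_of_discreteTopology
    ((continuous_apply _).comp continuous_subtype_val)

lemma isClosed_range_completionMap (f : G →* H) :
    IsClosed (Set.range (completionMap f)) :=
  (isCompact_range (continuous_completionMap f)).isClosed

lemma mem_closure_of_forall_coord {S : Set (completionSubgroup G)} {x : completionSubgroup G}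
    (h : ∀ N : FIN G, ∃ s ∈ S, s.1 N = x.1 N) : x ∈ closure S := by
  rw [mem_closure_iff]
  intro o ho hxo
  obtain ⟨U, hU, rfl⟩ := isOpen_induced_iff.mp ho
  obtain ⟨I, u, hu, hsub⟩ := isOpen_pi_iff.mp hU x.1 hxo
  obtain ⟨P, hP⟩ := FIN.exists_lb I
  obtain ⟨s, hsS, hs⟩ := h P
  refine ⟨s, hsub fun N hN => ?_, hsS⟩
  rw [agree_of_agree_le s x P N (hP N hN) hs]
  exact (hu N hN).2

lemma completionMap_apply (f : G →* H) (x : completionSubgroup G) (M : FIN H) :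
    (completionMap f x).1 M
      = QuotientGroup.map (comapFIN f M).1 M.1 f le_rfl (x.1 (comapFIN f M)) := rfl

end Aux

/-- the profinite completion functor is right exact: a short exact sequence
`1 → K → G → L → 1` induces an exact sequence `K̂ → Ĝ → L̂ → 1`; in particular the image
of `K̂` in `Ĝ` is a normal subgroup whose quotient is isomorphic to `L̂`. -/
theorem completion_right_exact
    (K G L : Type u) [Group K] [Group G] [Group L]
    (φ : K →* G) (ψ : G →* L)
    (hφ : Function.Injective φ) (hψ : Function.Surjective ψ)
    (hex : φ.range = ψ.ker) :
    (completionMap φ).range.Normal ∧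
    Function.Surjective (completionMap ψ) ∧
    (completionMap ψ).ker = (completionMap φ).range ∧
    Nonempty ((completionSubgroup G ⧸ (completionMap ψ).ker) ≃* completionSubgroup L) := by
  classical
  -- range ⊆ ker
  have hrk : (completionMap φ).range ≤ (completionMap ψ).ker := by
    rintro _ ⟨y, rfl⟩
    rw [MonoidHom.mem_ker]
    apply Subtype.ext
    funext M
    obtain ⟨k, hk⟩ := QuotientGroup.mk_surjective
      (y.1 (comapFIN φ (comapFIN ψ M)))
    have h1 : (completionMap φ y).1 (comapFIN ψ M)
        = QuotientGroup.mk (φ k) := by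
      rw [completionMap_apply, ← hk]; erw [QuotientGroup.map_mk]
    have h2 : ((completionMap ψ) ((completionMap φ) y)).1 M
        = QuotientGroup.mk (ψ (φ k)) := by
      rw [completionMap_apply, h1]; erw [QuotientGroup.map_mk]
    have h3 : ψ (φ k) = 1 := by
      have : φ k ∈ ψ.ker := hex ▸ ⟨k, rfl⟩
      exact this
    rw [h2, h3]
    rfl
  -- ker ⊆ range
  have hkr : (completionMap ψ).ker ≤ (completionMap φ).range := by
    intro x hx
    rw [MonoidHom.mem_ker] at hx
    have hcl : x ∈ closure (Set.range (completionMap φ)) := by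
      apply mem_closure_of_forall_coord
      intro N
      haveI := N.2.1; haveI := N.2.2
      haveI hMnorm : (N.1.map ψ).Normal := N.2.1.map ψ hψ
      have hMfin : (N.1.map ψ).FiniteIndex := by
        refine ⟨fun h0 => N.2.2.index_ne_zero ?_⟩
        exact Nat.eq_zero_of_zero_dvd (h0 ▸ N.1.index_map_dvd hψ)
      set M : FIN L := ⟨N.1.map ψ, N.2.1.map ψ hψ, hMfin⟩ with hM
      have hle : N.1 ≤ (comapFIN ψ M).1 := Subgroup.le_comap_map ψ N.1
      obtain ⟨g, hg⟩ := QuotientGroup.mk_surjective (x.1 N)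
      have hcompat : x.1 (comapFIN ψ M) = QuotientGroup.mk g := by
        rw [← x.2 N (comapFIN ψ M) hle, ← hg, QuotientGroup.map_mk]
        rfl
      have hone : (QuotientGroup.mk (ψ g) : L ⧸ M.1) = 1 := by
        have := congrFun (congrArg Subtype.val hx) M
        rw [completionMap_apply, hcompat] at this; erw [QuotientGroup.map_mk] at this
        simpa using this
      have hmem : ψ g ∈ N.1.map ψ := (QuotientGroup.eq_one_iff _).mp hone
      obtain ⟨n, hn, hψn⟩ := hmem
      have hker : g * n⁻¹ ∈ ψ.ker := by
        rw [MonoidHom.mem_ker, map_mul, map_inv, hψn, mul_inv_cancel]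
      obtain ⟨k, hk⟩ : g * n⁻¹ ∈ φ.range := hex ▸ hker
      refine ⟨completionMap φ (iota K k), ⟨iota K k, rfl⟩, ?_⟩
      have : (completionMap φ (iota K k)).1 N = QuotientGroup.mk (φ k) := rfl
      rw [this, hk, ← hg]
      exact QuotientGroup.mk_mul_of_mem g (N.1.inv_mem hn)
    rwa [IsClosed.closure_eq (isClosed_range_completionMap φ)] at hcl
  have h3 : (completionMap ψ).ker = (completionMap φ).range := le_antisymm hkr hrk
  -- surjectivity
  have h2 : Function.Surjective (completionMap ψ) := by
    intro y
    have hcl : y ∈ closure (Set.range (completionMap ψ)) := by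
      apply mem_closure_of_forall_coord
      intro M
      obtain ⟨l, hl⟩ := QuotientGroup.mk_surjective (y.1 M)
      obtain ⟨g, hg⟩ := hψ l
      refine ⟨completionMap ψ (iota G g), ⟨iota G g, rfl⟩, ?_⟩
      have : (completionMap ψ (iota G g)).1 M = QuotientGroup.mk (ψ g) := rfl
      rw [this, hg, hl]
    rwa [IsClosed.closure_eq (isClosed_range_completionMap ψ)] at hcl
  refine ⟨h3 ▸ MonoidHom.normal_ker (completionMap ψ), h2, h3,
    ⟨QuotientGroup.quotientKerEquivOfSurjective (completionMap ψ) h2⟩⟩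
end

section
/- Let P and Q be finitely generated free abelian groups, and let n be a positive integer. View P as a subgroup of P̂ = Ẑ ⊗_ℤ P and Q as a subgroup of Q̂ = Ẑ ⊗_ℤ Q via the canonical embeddings. Suppose Φ : P̂ → Q̂ is a continuous homomorphism, λ ∈ Ẑ is a unit, φ : P → Q is a homomorphism with Φ|_P = φ (composed with the embedding), and Φ maps the closure of n·P into λ·Q. Then φ(P) ⊆ λ·Q, and hence Φ = λ ⊗ ψ for a homomorphism ψ : P → Q with λ·ψ = φ on n·P. -/
/-- The profinite completion of `ℤ`, as the subring of compatible families in the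
product of all the finite cyclic rings `ℤ/n`. -/
def ZHatSubring : Subring (∀ n : ℕ+, ZMod (n : ℕ)) where
  carrier := {x | ∀ (m k : ℕ+) (h : (m : ℕ) ∣ (k : ℕ)),
    ZMod.castHom h (ZMod (m : ℕ)) (x k) = x m}
  zero_mem' := by intro m k h; simp
  one_mem' := by intro m k h; simp only [Pi.one_apply, map_one]
  add_mem' := fun {a b} ha hb => by
    intro m k h
    simp only [Pi.add_apply, map_add, ha m k h, hb m k h]
  mul_mem' := fun {a b} ha hb => by
    intro m k h
    simp only [Pi.mul_apply, map_mul, ha m k h, hb m k h]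
  neg_mem' := fun {a} ha => by
    intro m k h
    simp only [Pi.neg_apply, map_neg, ha m k h]

/-- The ring `Ẑ` of profinite integers. -/
abbrev ZHat : Type := ↥ZHatSubring

instance (n : ℕ) : TopologicalSpace (ZMod n) := ⊥

instance (n : ℕ) : DiscreteTopology (ZMod n) := ⟨rfl⟩

namespace ZHatAux

lemma val_intCast (a : ℤ) (m : ℕ+) : ((a : ZHat) : ∀ n : ℕ+, ZMod (n:ℕ)) m = (a : ZMod (m:ℕ)) := by
  have h : ((a : ZHat) : ∀ n : ℕ+, ZMod (n:ℕ)) = ((a : ∀ n : ℕ+, ZMod (n:ℕ))) :=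
    map_intCast ZHatSubring.subtype a
  rw [h]; simp

lemma intCast_injective : Function.Injective ((↑) : ℤ → ZHat) := by
  intro a b h
  set m : ℕ+ := ⟨(a - b).natAbs + 1, Nat.succ_pos _⟩ with hm
  have h1 : ((a - b : ℤ) : ZMod (m : ℕ)) = 0 := by
    push_cast
    have := congrFun (congrArg Subtype.val h) m
    rw [val_intCast, val_intCast] at this
    rw [this, sub_self]
  rw [ZMod.intCast_zmod_eq_zero_iff_dvd] at h1
  have h2 : |a - b| < ((m : ℕ) : ℤ) := by
    rw [Int.abs_eq_natAbs]
    exact_mod_cast Nat.lt_succ_self _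
  have := Int.eq_zero_of_abs_lt_dvd h1 h2
  omega

lemma torsion_free {n : ℕ} (hn : 0 < n) {x : ZHat} (h : ((n : ℕ) : ZHat) * x = 0) : x = 0 := by
  ext m
  have hK : (m : ℕ) ∣ ((m * ⟨n, hn⟩ : ℕ+) : ℕ) := by
    exact ⟨n, PNat.mul_coe _ _⟩
  set K : ℕ+ := m * ⟨n, hn⟩ with hKdef
  have hcomp : x.val m = ZMod.castHom hK (ZMod (m : ℕ)) (x.val K) := (x.2 m K hK).symm
  have hKn : (K : ℕ) = (m : ℕ) * n := rfl
  haveI : NeZero ((K : ℕ)) := ⟨K.pos.ne'⟩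
  haveI : NeZero ((m : ℕ)) := ⟨m.pos.ne'⟩
  -- component of h at K
  have h2 : ((n : ZMod (K : ℕ))) * x.val K = 0 := by
    have := congrFun (congrArg Subtype.val h) K
    have hnat : (((n : ℕ) : ZHat) : ∀ j : ℕ+, ZMod (j:ℕ)) K = ((n : ℕ) : ZMod (K : ℕ)) := by
      have := val_intCast (n : ℤ) K
      push_cast at this ⊢
      exact this
    simpa [hnat] using this
  set v : ℕ := (x.val K).val with hv
  have hxv : ((v : ℕ) : ZMod (K : ℕ)) = x.val K := ZMod.natCast_rightInverse _
  have h3 : ((n * v : ℕ) : ZMod (K : ℕ)) = 0 := by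
    push_cast
    rw [hxv]; exact h2
  rw [ZMod.natCast_eq_zero_iff] at h3
  have h4 : (m : ℕ) ∣ v := by
    rw [hKn] at h3
    rcases h3 with ⟨c, hc⟩
    have h5 : n * v = n * ((m : ℕ) * c) := by rw [hc]; ring
    exact ⟨c, Nat.eq_of_mul_eq_mul_left hn h5⟩
  rw [hcomp, ← hxv, map_natCast]
  simpa [ZMod.natCast_eq_zero_iff] using h4

lemma dense_intCast : Dense (Set.range ((↑) : ℤ → ZHat)) := by
  intro x
  rw [mem_closure_iff_nhds]
  intro U hU
  rw [nhds_induced] at hU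
  obtain ⟨V, hV, hVU⟩ := hU
  rw [nhds_pi, Filter.mem_pi] at hV
  obtain ⟨I, hIfin, t, ht, htV⟩ := hV
  set F := hIfin.toFinset with hF
  set N : ℕ+ := ∏ i ∈ F, i with hN
  set a : ℤ := ((x.val N).val : ℤ) with ha
  refine ⟨(a : ZHat), ?_, ⟨a, rfl⟩⟩
  apply hVU
  apply htV
  intro i hi
  have hdvd : (i : ℕ) ∣ (N : ℕ) := by
    obtain ⟨c, hc⟩ : i ∣ N := Finset.dvd_prod_of_mem _ (hIfin.mem_toFinset.mpr hi)
    exact ⟨c, by rw [hc]; simp [PNat.mul_coe]⟩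
  haveI : NeZero ((N : ℕ)) := ⟨N.pos.ne'⟩
  have key : ((a : ZHat) : ∀ j : ℕ+, ZMod (j:ℕ)) i = x.val i := by
    rw [val_intCast]
    have hxN : (((x.val N).val : ℕ) : ZMod (N : ℕ)) = x.val N := ZMod.natCast_rightInverse _
    calc ((a : ℤ) : ZMod (i : ℕ)) = (((x.val N).val : ℕ) : ZMod (i : ℕ)) := by
          rw [ha, Int.cast_natCast]
    _ = ZMod.castHom hdvd (ZMod (i:ℕ)) (((x.val N).val : ℕ) : ZMod (N : ℕ)) := by rw [map_natCast]
    _ = ZMod.castHom hdvd (ZMod (i:ℕ)) (x.val N) := by rw [hxN]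
    _ = x.val i := x.2 i N hdvd
  exact Set.mem_of_eq_of_mem key (mem_nhds_discrete.mp (ht i))

end ZHatAux

/-- let `P = ℤᵏ` and `Q = ℤˡ` be finitely generated free abelian groups,
embedded in `P̂ = Ẑᵏ` and `Q̂ = Ẑˡ`, and let `n > 0`. If `Φ : P̂ → Q̂` is a continuous
homomorphism restricting on `P` to `φ : P → Q`, `λ ∈ Ẑˣ`, and `Φ` maps the closure of
`n·P` into `λ·Q`, then `φ(P) ⊆ λ·Q`; hence `Φ = λ ⊗ ψ` for a homomorphism `ψ : P → Q`
with `λ·ψ = φ` on `n·P`. -/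
theorem extension_scalar_regularity
    (k l n : ℕ) (hn : 0 < n)
    (Φ : (Fin k → ZHat) →+ (Fin l → ZHat)) (hΦ : Continuous Φ)
    (lam : ZHatˣ) (φ : (Fin k → ℤ) →+ (Fin l → ℤ))
    (hres : ∀ p : Fin k → ℤ, Φ (fun i => ((p i : ℤ) : ZHat)) = fun j => ((φ p j : ℤ) : ZHat))
    (hmap : ⇑Φ '' closure (Set.range
          (fun p : Fin k → ℤ => fun i => (((n : ℤ) * p i : ℤ) : ZHat))) ⊆
        Set.range (fun q : Fin l → ℤ => fun j => (lam : ZHat) * ((q j : ℤ) : ZHat))) :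
    (∀ p : Fin k → ℤ, ∃ q : Fin l → ℤ, ∀ j,
        ((φ p j : ℤ) : ZHat) = (lam : ZHat) * ((q j : ℤ) : ZHat)) ∧
    ∃ ψ : (Fin k → ℤ) →+ (Fin l → ℤ),
      (∀ p : Fin k → ℤ, ∀ j,
          (lam : ZHat) * ((ψ ((n : ℤ) • p) j : ℤ) : ZHat) = ((φ ((n : ℤ) • p) j : ℤ) : ZHat)) ∧
      (∀ x : Fin k → ZHat, Φ x = fun j =>
          (lam : ZHat) * ∑ i, ((ψ (Pi.single i 1) j : ℤ) : ZHat) * x i) := by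
  haveI : NeZero n := ⟨hn.ne'⟩
  set Λ : ZHat := (lam : ZHat) with hΛ
  set np : ℕ+ := ⟨n, hn⟩ with hnp
  let ev : ZHat →+* ZMod n := (Pi.evalRingHom _ np).comp ZHatSubring.subtype
  have key : ∀ p : Fin k → ℤ, ∃ q : Fin l → ℤ, ∀ j,
      ((φ p j : ℤ) : ZHat) = Λ * ((q j : ℤ) : ZHat) := by
    intro p
    have hmem : (fun i => (((n:ℤ) * p i : ℤ) : ZHat)) ∈ closure (Set.range
        (fun p : Fin k → ℤ => fun i => (((n : ℤ) * p i : ℤ) : ZHat))) :=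
      subset_closure ⟨p, rfl⟩
    obtain ⟨q, hq⟩ := hmap ⟨_, hmem, rfl⟩
    have hnpp : (fun i => (((n:ℤ) * p i : ℤ) : ZHat))
        = (fun i => ((((n:ℤ) • p) i : ℤ) : ZHat)) := by
      funext i; simp [smul_eq_mul]
    have h2 : ∀ j, ((n : ℕ) : ZHat) * ((φ p j : ℤ) : ZHat) = Λ * ((q j : ℤ) : ZHat) := by
      intro j
      have h := congrFun hq j
      rw [hnpp, hres ((n:ℤ) • p)] at h
      simp only at h
      have hφ : φ ((n:ℤ) • p) j = (n:ℤ) * φ p j := by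
        rw [map_zsmul]; simp [smul_eq_mul]
      rw [hφ] at h
      push_cast at h ⊢
      exact h.symm
    have hdvd : ∀ j, (n:ℤ) ∣ q j := by
      intro j
      have h := congrArg ev (h2 j)
      rw [map_mul, map_mul, map_natCast, map_intCast, map_intCast,
        ZMod.natCast_self, zero_mul] at h
      have hu : IsUnit (ev Λ) := lam.isUnit.map ev
      have h0 : ((q j : ℤ) : ZMod n) = 0 := by
        rcases hu with ⟨u, hu⟩
        rw [← hu] at h
        exact (Units.mul_right_eq_zero u).mp h.symm
      rwa [ZMod.intCast_zmod_eq_zero_iff_dvd] at h0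
    refine ⟨fun j => q j / n, fun j => ?_⟩
    obtain ⟨c, hc⟩ := hdvd j
    have hq' : q j / n = c := by
      rw [hc]; exact Int.mul_ediv_cancel_left _ (by exact_mod_cast hn.ne')
    show ((φ p j : ℤ) : ZHat) = Λ * ((q j / (n:ℤ) : ℤ) : ZHat)
    rw [hq']
    have hzero : ((n : ℕ) : ZHat) * (((φ p j : ℤ) : ZHat) - Λ * ((c : ℤ) : ZHat)) = 0 := by
      rw [mul_sub, h2 j, hc]
      push_cast
      ring
    have := ZHatAux.torsion_free hn hzero
    exact sub_eq_zero.mp this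
  choose qf hqf using key
  have hadd : ∀ p p' : Fin k → ℤ, qf (p + p') = qf p + qf p' := by
    intro p p'; funext j
    apply ZHatAux.intCast_injective
    apply (Units.mul_right_inj lam).mp
    rw [← hqf (p + p') j, map_add φ p p']
    push_cast [Pi.add_apply]
    rw [hqf p j, hqf p' j]
    ring
  set ψ : (Fin k → ℤ) →+ (Fin l → ℤ) := AddMonoidHom.mk' qf hadd with hψ
  have hpsum : ∀ p : Fin k → ℤ, ∑ i, Pi.single i (p i) = p := by
    intro p; funext j
    simp [Finset.sum_apply, Pi.single_apply, Finset.sum_ite_eq]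
  have hsingle : ∀ p : Fin k → ℤ, ψ p = ∑ i, p i • ψ (Pi.single i 1) := by
    intro p
    conv_lhs => rw [← hpsum p]
    rw [map_sum]
    refine Finset.sum_congr rfl fun i _ => ?_
    have hsm : Pi.single i (p i) = p i • Pi.single (M := fun _ => ℤ) i 1 := by
      funext t
      simp [Pi.single_apply, Pi.smul_apply, smul_eq_mul, mul_ite]
    rw [hsm, map_zsmul]
  have hdense : Dense (Set.range (fun p : Fin k → ℤ => fun i => ((p i : ℤ) : ZHat))) := by
    have hrange : Set.range (fun p : Fin k → ℤ => fun i => ((p i : ℤ) : ZHat))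
        = Set.pi Set.univ (fun _ => Set.range ((↑) : ℤ → ZHat)) := by
      ext x
      constructor
      · rintro ⟨p, rfl⟩ i _
        exact ⟨p i, rfl⟩
      · intro hx
        choose p hp using fun i => hx i (Set.mem_univ i)
        exact ⟨p, funext fun i => hp i⟩
    rw [hrange]
    exact dense_pi Set.univ fun i _ => ZHatAux.dense_intCast
  have hLc : Continuous (fun x : Fin k → ZHat =>
      fun j => Λ * ∑ i, ((ψ (Pi.single i 1) j : ℤ) : ZHat) * x i) := by
    apply continuous_pi
    intro j
    exact continuous_const.mul (continuous_finset_sum _ fun i _ =>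
      continuous_const.mul (continuous_apply i))
  have heq : ⇑Φ = (fun x : Fin k → ZHat =>
      fun j => Λ * ∑ i, ((ψ (Pi.single i 1) j : ℤ) : ZHat) * x i) := by
    apply Continuous.ext_on hdense hΦ hLc
    rintro x ⟨p, rfl⟩
    rw [hres p]
    funext j
    rw [hqf p j]
    congr 1
    have h1 : qf p j = ∑ i, p i * qf (Pi.single i 1) j := by
      have := congrFun (hsingle p) j
      simpa [Finset.sum_apply, smul_eq_mul, hψ, AddMonoidHom.mk'_apply] using this
    rw [h1]
    push_cast
    refine Finset.sum_congr rfl fun i _ => mul_comm _ _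
  refine ⟨fun p => ⟨qf p, hqf p⟩, ψ, fun p j => (hqf ((n:ℤ) • p) j).symm, fun x => congrFun heq x⟩
end

section
/- Let a, b ∈ ℤ be nonzero integers and λ ∈ Ẑ^× a unit of the profinite integers such that λ·a = b in Ẑ. Then λ = ±1 and b = ±a. -/
def ZHatEv (n : ℕ+) : ZHat →+* ZMod (n : ℕ) :=
  (Pi.evalRingHom _ n).comp ZHatSubring.subtype

lemma ZHatEv_intCast (n : ℕ+) (a : ℤ) : ZHatEv n (a : ZHat) = (a : ZMod (n:ℕ)) :=
  map_intCast _ _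

lemma ZHat.dvd_of_mul_eq (a b : ℤ) (hab : a * b ≠ 0) (x : ZHat)
    (h : x * (a : ZHat) = (b : ZHat)) : a ∣ b := by
  set n : ℕ+ := ⟨(a*b).natAbs, Int.natAbs_pos.mpr hab⟩ with hn
  haveI : NeZero (n : ℕ) := ⟨n.ne_zero⟩
  have h1 : ZHatEv n x * (a : ZMod (n:ℕ)) = (b : ZMod (n:ℕ)) := by
    have := congrArg (ZHatEv n) h
    rwa [map_mul, ZHatEv_intCast, ZHatEv_intCast] at this
  set X : ℤ := ((ZHatEv n x).val : ℤ) with hX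
  have hXc : (X : ZMod (n:ℕ)) = ZHatEv n x := by
    rw [hX]; simp [ZMod.natCast_val, ZMod.cast_id]
  have h2 : ((b - X * a : ℤ) : ZMod (n:ℕ)) = 0 := by
    push_cast
    rw [hXc, h1]; ring
  have h3 : ((n:ℕ) : ℤ) ∣ b - X * a := (ZMod.intCast_zmod_eq_zero_iff_dvd _ _).mp h2
  have h4 : a ∣ ((n:ℕ) : ℤ) := by
    have he : ((n:ℕ):ℤ) = ((a*b).natAbs : ℤ) := rfl
    rw [he, Int.dvd_natAbs]
    exact dvd_mul_right a b
  have h5 : a ∣ b - X * a := h4.trans h3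
  have h6 := dvd_add h5 (dvd_mul_left a X)
  simpa using h6

lemma ZHat.eq_zero_of_mul_int (a : ℤ) (ha : a ≠ 0) (x : ZHat)
    (h : x * (a : ZHat) = 0) : x = 0 := by
  have hA : a.natAbs ≠ 0 := Int.natAbs_ne_zero.mpr ha
  ext m
  show x.val m = (0 : ZHat).val m
  set n : ℕ+ := m * ⟨a.natAbs, Int.natAbs_pos.mpr ha⟩ with hn
  haveI : NeZero (n : ℕ) := ⟨n.ne_zero⟩
  haveI : NeZero (m : ℕ) := ⟨m.ne_zero⟩
  have hdvd : (m : ℕ) ∣ (n : ℕ) := ⟨a.natAbs, rfl⟩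
  have hcomp : ZMod.castHom hdvd (ZMod (m:ℕ)) (x.val n) = x.val m := x.2 m n hdvd
  have h1 : ZHatEv n x * (a : ZMod (n:ℕ)) = 0 := by
    have := congrArg (ZHatEv n) h
    rwa [map_mul, ZHatEv_intCast, map_zero] at this
  set X : ℤ := ((ZHatEv n x).val : ℤ) with hX
  have hXc : (X : ZMod (n:ℕ)) = ZHatEv n x := by
    rw [hX]; simp [ZMod.natCast_val, ZMod.cast_id]
  have h2 : ((X * a : ℤ) : ZMod (n:ℕ)) = 0 := by push_cast; rw [hXc, h1]
  have h3 : ((n:ℕ) : ℤ) ∣ X * a := (ZMod.intCast_zmod_eq_zero_iff_dvd _ _).mp h2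
  have h4 : (m : ℕ) * a.natAbs ∣ X.natAbs * a.natAbs := by
    have := Int.natAbs_dvd_natAbs.mpr h3
    simp [hn, Int.natAbs_mul, Int.natAbs_abs] at this; exact this
  have h5 : (m : ℕ) ∣ X.natAbs := (mul_dvd_mul_iff_right hA).mp h4
  have h6 : ((m:ℕ) : ℤ) ∣ X := Int.dvd_natAbs.mp (Int.natCast_dvd_natCast.mpr h5)
  have h7 : (X : ZMod (m:ℕ)) = 0 := (ZMod.intCast_zmod_eq_zero_iff_dvd _ _).mpr h6
  have : x.val n = (X : ZMod (n:ℕ)) := hXc.symm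
  rw [show x.val m = ZMod.castHom hdvd (ZMod (m:ℕ)) (x.val n) from hcomp.symm, this,
    map_intCast, h7]
  rfl

/-- if a unit `λ` of `Ẑ` carries a nonzero integer `a` to an integer `b`
(i.e. `λ·a = b` in `Ẑ` with `a, b` nonzero), then `λ = ±1` and `b = ±a`. -/
theorem unit_mul_int_eq_int (a b : ℤ) (ha : a ≠ 0) (hb : b ≠ 0) (lam : ZHatˣ)
    (h : (lam : ZHat) * (a : ZHat) = (b : ZHat)) :
    ((lam : ZHat) = 1 ∧ b = a) ∨ ((lam : ZHat) = -1 ∧ b = -a) := by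
  have hab : a ∣ b := ZHat.dvd_of_mul_eq a b (mul_ne_zero ha hb) _ h
  have h' : ((lam⁻¹ : ZHatˣ) : ZHat) * (b : ZHat) = (a : ZHat) := by
    rw [← h, ← mul_assoc]
    simp
  have hba : b ∣ a := ZHat.dvd_of_mul_eq b a (mul_ne_zero hb ha) _ h'
  have hassoc : b = a ∨ b = -a :=
    Int.associated_iff.mp (associated_of_dvd_dvd hba hab)
  rcases hassoc with he | he
  · left
    refine ⟨?_, he⟩
    have : ((lam : ZHat) - 1) * (a : ZHat) = 0 := by
      rw [sub_mul, one_mul, h, he]; ring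
    have := ZHat.eq_zero_of_mul_int a ha _ this
    exact sub_eq_zero.mp this
  · right
    refine ⟨?_, he⟩
    have : ((lam : ZHat) + 1) * (a : ZHat) = 0 := by
      rw [add_mul, one_mul, h, he]; push_cast; ring
    have := ZHat.eq_zero_of_mul_int a ha _ this
    exact eq_neg_of_add_eq_zero_left this
end

section
/- In the setting of upper-triangular compatibility D₁·A = A'·D₀ with A, A' ∈ GL(2,ℤ) having nonzero lower-left entries γ, γ', and Dᵢ = [[λᵢ,ρᵢ],[0,μᵢ]] with λᵢ, μᵢ ∈ Ẑ^×: if additionally λ₀ = ±μ₀, then ρ₀ ∈ λ₀·ℤ and ρ₁ ∈ λ₀·ℤ. -/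
lemma ZHat_tf (n : ℤ) (hn : n ≠ 0) (z : ZHat) (h : (n:ZHat) * z = 0) : z = 0 := by
  have hN : n.natAbs ≠ 0 := Int.natAbs_ne_zero.2 hn
  ext k
  set N : ℕ+ := ⟨n.natAbs, Nat.pos_of_ne_zero hN⟩
  have hKk : (k : ℕ) ∣ ((N * k : ℕ+) : ℕ) := by
    simp [PNat.mul_coe, Dvd.intro]
  have hz := z.2 k (N * k) hKk
  have hcomp : ((n:ZHat) * z).1 (N*k) = (0 : ZHat).1 (N*k) := by rw [h]
  have hc : (n : ZMod ((N*k : ℕ+):ℕ)) * z.1 (N*k) = 0 := hcomp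
  set x := (z.1 (N*k)).val with hx
  have hxz : ((x : ℕ) : ZMod ((N*k : ℕ+):ℕ)) = z.1 (N*k) :=
    ZMod.natCast_val _ |>.trans (ZMod.cast_id _ _)
  -- divisibility
  have hdvd : (((N*k : ℕ+):ℕ) : ℤ) ∣ n * (x : ℤ) := by
    rw [← ZMod.intCast_zmod_eq_zero_iff_dvd]
    rw [Int.cast_mul, Int.cast_natCast]
    rw [hxz, hc]
  have hk : ((k:ℕ) : ℤ) ∣ (x : ℤ) := by
    have hdvd' : (n.natAbs:ℤ) * ((k:ℕ):ℤ) ∣ (n.natAbs:ℤ) * (x:ℤ) := by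
      rcases Int.natAbs_eq n with he | he
      · rw [he] at hdvd
        rw [show ((n.natAbs:ℤ) * ((k:ℕ):ℤ) = (((N*k : ℕ+):ℕ):ℤ)) by simp only [PNat.mul_coe, Nat.cast_mul]; rfl]
        exact hdvd
      · rw [he] at hdvd
        rw [show ((n.natAbs:ℤ) * ((k:ℕ):ℤ) = (((N*k : ℕ+):ℕ):ℤ)) by simp only [PNat.mul_coe, Nat.cast_mul]; rfl]
        rw [← dvd_neg]
        convert hdvd using 1
        rfl
        ring
    exact (mul_dvd_mul_iff_left (by exact_mod_cast hN : (n.natAbs:ℤ) ≠ 0)).mp hdvd'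
  have hkx : (k:ℕ) ∣ x := Int.ofNat_dvd.mp (by exact_mod_cast hk)
  show z.1 k = (0:ZHat).1 k
  rw [← hz, ← hxz]
  rw [map_natCast]; exact (ZMod.natCast_eq_zero_iff _ _).2 hkx

lemma ZHat_int_eq (n m : ℤ) (hn : n ≠ 0) (y : ZHat) (h : (n:ZHat) * y = (m:ZHat)) :
    ∃ s : ℤ, y = (s:ZHat) := by
  have hN : n.natAbs ≠ 0 := Int.natAbs_ne_zero.2 hn
  set N : ℕ+ := ⟨n.natAbs, Nat.pos_of_ne_zero hN⟩
  have hcN : (n : ZMod (N:ℕ)) * y.1 N = (m : ZMod (N:ℕ)) :=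
    congrFun (congrArg Subtype.val h) N
  have hn0 : (n : ZMod (N:ℕ)) = 0 :=
    (ZMod.intCast_zmod_eq_zero_iff_dvd _ _).2 (Int.natAbs_dvd.2 dvd_rfl)
  have hm0 : (m : ZMod (N:ℕ)) = 0 := by rw [← hcN, hn0, zero_mul]
  have hnm : n ∣ m := Int.natAbs_dvd.1 ((ZMod.intCast_zmod_eq_zero_iff_dvd _ _).1 hm0)
  obtain ⟨s, rfl⟩ := hnm
  refine ⟨s, ?_⟩
  have : (n:ZHat) * (y - (s:ZHat)) = 0 := by push_cast at h ⊢; linear_combination h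
  have := ZHat_tf n hn _ this
  exact sub_eq_zero.1 this

open Matrix


/-- in the upper-triangular compatibility situation `D₁·A = A'·D₀` with
`A, A' ∈ GL(2,ℤ)` having nonzero lower-left entries, if moreover `λ₀ = ±μ₀` then the
off-diagonal entries satisfy `ρ₀ ∈ λ₀·ℤ` and `ρ₁ ∈ λ₀·ℤ`. -/
theorem triangular_compatibility_offdiag
    (lam0 mu0 lam1 mu1 : ZHatˣ) (rho0 rho1 : ZHat)
    (A A' : Matrix (Fin 2) (Fin 2) ℤ) (hA : IsUnit A.det) (hA' : IsUnit A'.det)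
    (hγ : A 1 0 ≠ 0) (hγ' : A' 1 0 ≠ 0)
    (h : (!![(lam1 : ZHat), rho1; 0, (mu1 : ZHat)]) * (A.map (Int.cast : ℤ → ZHat)) =
         (A'.map (Int.cast : ℤ → ZHat)) * (!![(lam0 : ZHat), rho0; 0, (mu0 : ZHat)]))
    (hdiag : (lam0 : ZHat) = (mu0 : ZHat) ∨ (lam0 : ZHat) = -(mu0 : ZHat)) :
    (∃ s : ℤ, rho0 = (lam0 : ZHat) * (s : ZHat)) ∧
    (∃ t : ℤ, rho1 = (lam0 : ZHat) * (t : ZHat)) := by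
  -- determinant equation (taken before rewriting h)
  have hdet : ((lam1:ZHat)*(mu1:ZHat)) * ((A.det : ℤ):ZHat)
      = ((A'.det : ℤ):ZHat) * ((lam0:ZHat)*(mu0:ZHat)) := by
    have hd := congrArg Matrix.det h
    rw [Matrix.det_mul, Matrix.det_mul, Matrix.det_fin_two_of, Matrix.det_fin_two_of] at hd
    have hm : (A.map (Int.cast : ℤ → ZHat)).det = ((A.det : ℤ):ZHat) := by
      rw [Matrix.det_fin_two, Matrix.det_fin_two]
      simp only [Matrix.map_apply]
      push_cast
      ring
    have hm' : (A'.map (Int.cast : ℤ → ZHat)).det = ((A'.det : ℤ):ZHat) := by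
      rw [Matrix.det_fin_two, Matrix.det_fin_two]
      simp only [Matrix.map_apply]
      push_cast
      ring
    rw [hm, hm'] at hd
    linear_combination hd
  -- entry equations
  have hAm : A.map (Int.cast : ℤ → ZHat)
      = !![((A 0 0 : ℤ):ZHat), ((A 0 1 : ℤ):ZHat); ((A 1 0 : ℤ):ZHat), ((A 1 1 : ℤ):ZHat)] := by
    ext i j; fin_cases i <;> fin_cases j <;> simp [Matrix.map_apply]
  have hAm' : A'.map (Int.cast : ℤ → ZHat)
      = !![((A' 0 0 : ℤ):ZHat), ((A' 0 1 : ℤ):ZHat); ((A' 1 0 : ℤ):ZHat), ((A' 1 1 : ℤ):ZHat)] := by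
    ext i j; fin_cases i <;> fin_cases j <;> simp [Matrix.map_apply]
  rw [hAm, hAm', Matrix.mul_fin_two, Matrix.mul_fin_two] at h
  have e00 : (lam1:ZHat) * ((A 0 0 : ℤ):ZHat) + rho1 * ((A 1 0 : ℤ):ZHat)
      = ((A' 0 0 : ℤ):ZHat) * (lam0:ZHat) := by
    have := congrFun (congrFun h 0) 0
    simp only [Matrix.cons_val', Matrix.cons_val_zero, Matrix.empty_val', Matrix.cons_val_fin_one,
      Matrix.cons_val_one, Matrix.head_cons, Matrix.head_fin_const, Matrix.of_apply] at this
    linear_combination this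
  have e10 : (mu1:ZHat) * ((A 1 0 : ℤ):ZHat) = ((A' 1 0 : ℤ):ZHat) * (lam0:ZHat) := by
    have := congrFun (congrFun h 1) 0
    simp only [Matrix.cons_val', Matrix.cons_val_zero, Matrix.empty_val', Matrix.cons_val_fin_one,
      Matrix.cons_val_one, Matrix.head_cons, Matrix.head_fin_const, Matrix.of_apply] at this
    linear_combination this
  have e11 : (mu1:ZHat) * ((A 1 1 : ℤ):ZHat)
      = ((A' 1 0 : ℤ):ZHat) * rho0 + ((A' 1 1 : ℤ):ZHat) * (mu0:ZHat) := by
    have := congrFun (congrFun h 1) 1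
    simp only [Matrix.cons_val', Matrix.cons_val_zero, Matrix.empty_val', Matrix.cons_val_fin_one,
      Matrix.cons_val_one, Matrix.head_cons, Matrix.head_fin_const, Matrix.of_apply] at this
    linear_combination this
  -- sign ε with μ₀ = ε·λ₀
  obtain ⟨ε, hε⟩ : ∃ ε : ℤ, (mu0:ZHat) = (ε:ZHat) * (lam0:ZHat) := by
    rcases hdiag with h1 | h1
    · exact ⟨1, by push_cast; linear_combination -h1⟩
    · exact ⟨-1, by push_cast; linear_combination h1⟩
  -- unit facts
  have hu : (lam0:ZHat) * ((lam0⁻¹ : ZHatˣ):ZHat) = 1 := lam0.mul_inv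
  have hd2 : ((A.det : ℤ):ZHat) * ((A.det : ℤ):ZHat) = 1 := by
    rcases Int.isUnit_iff.mp hA with h1 | h1 <;> rw [h1] <;> norm_num
  have hLM : (lam1:ZHat) * (mu1:ZHat)
      = ((A.det : ℤ):ZHat) * ((A'.det : ℤ):ZHat) * ((lam0:ZHat) * (mu0:ZHat)) := by
    push_cast [-Int.cast_det]
    linear_combination ((A.det : ℤ):ZHat) * hdet - ((lam1:ZHat) * (mu1:ZHat)) * hd2
  -- n ≠ 0
  have hn : A 1 0 * A' 1 0 ≠ 0 := mul_ne_zero hγ hγ'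
  constructor
  · -- ρ₀
    have K0 : ((A 1 0 * A' 1 0 : ℤ):ZHat) * rho0
        = (lam0:ZHat) * ((A' 1 0 * A 1 1 - ε * A' 1 1 * A 1 0 : ℤ):ZHat) := by
      push_cast
      linear_combination -((A 1 0 : ℤ):ZHat) * e11 + ((A 1 1 : ℤ):ZHat) * e10
        - ((A 1 0 : ℤ):ZHat) * ((A' 1 1 : ℤ):ZHat) * hε
    have hyp : ((A 1 0 * A' 1 0 : ℤ):ZHat) * (((lam0⁻¹ : ZHatˣ):ZHat) * rho0)
        = ((A' 1 0 * A 1 1 - ε * A' 1 1 * A 1 0 : ℤ):ZHat) := by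
      linear_combination ((lam0⁻¹ : ZHatˣ):ZHat) * K0
        + ((A' 1 0 * A 1 1 - ε * A' 1 1 * A 1 0 : ℤ):ZHat) * hu
    obtain ⟨s, hs⟩ := ZHat_int_eq _ _ hn _ hyp
    exact ⟨s, by linear_combination (lam0:ZHat) * hs - rho0 * hu⟩
  · -- ρ₁
    have K1 : (lam0:ZHat) * (((A 1 0 * A' 1 0 : ℤ):ZHat) * rho1)
        = (lam0:ZHat) * ((lam0:ZHat)
          * ((A' 0 0 * A' 1 0 - A.det * A'.det * ε * A 0 0 * A 1 0 : ℤ):ZHat)) := by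
      push_cast [-Int.cast_det]
      linear_combination (mu1:ZHat) * ((A 1 0 : ℤ):ZHat) * e00
        - ((A 0 0 : ℤ):ZHat) * ((A 1 0 : ℤ):ZHat) * hLM
        - (rho1 * ((A 1 0 : ℤ):ZHat) - ((A' 0 0 : ℤ):ZHat) * (lam0:ZHat)) * e10
        - ((A.det : ℤ):ZHat) * ((A'.det : ℤ):ZHat) * ((A 0 0 : ℤ):ZHat)
          * ((A 1 0 : ℤ):ZHat) * (lam0:ZHat) * hε
    have K1' : ((A 1 0 * A' 1 0 : ℤ):ZHat) * rho1
        = (lam0:ZHat) * ((A' 0 0 * A' 1 0 - A.det * A'.det * ε * A 0 0 * A 1 0 : ℤ):ZHat) :=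
      (Units.mul_right_inj lam0).mp K1
    have hyp : ((A 1 0 * A' 1 0 : ℤ):ZHat) * (((lam0⁻¹ : ZHatˣ):ZHat) * rho1)
        = ((A' 0 0 * A' 1 0 - A.det * A'.det * ε * A 0 0 * A 1 0 : ℤ):ZHat) := by
      linear_combination ((lam0⁻¹ : ZHatˣ):ZHat) * K1'
        + ((A' 0 0 * A' 1 0 - A.det * A'.det * ε * A 0 0 * A 1 0 : ℤ):ZHat) * hu
    obtain ⟨t, ht⟩ := ZHat_int_eq _ _ hn _ hyp
    exact ⟨t, by linear_combination (lam0:ZHat) * ht - rho1 * hu⟩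
end

section
/- Every finite subgroup of GL(2,ℤ) has order at most 12. -/
open Matrix

private abbrev M2Z := Matrix (Fin 2) (Fin 2) ℤ

private lemma ch2 {R : Type*} [CommRing R] (A : Matrix (Fin 2) (Fin 2) R) :
    A * A = A.trace • A - A.det • 1 := by
  ext i j
  fin_cases i <;> fin_cases j <;>
    simp [Matrix.mul_apply, Fin.sum_univ_two, Matrix.trace_fin_two, Matrix.det_fin_two,
      Matrix.one_apply] <;> ring

private def cheb (t : ℤ) : ℕ → ℤ
  | 0 => 0
  | 1 => 1
  | n+2 => t * cheb t (n+1) - cheb t n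

private lemma cheb_pow (A : M2Z) (hdet : A.det = 1) :
    ∀ n : ℕ, A ^ (n+1) = cheb A.trace (n+1) • A - cheb A.trace n • 1 := by
  intro n
  induction n with
  | zero => simp [cheb]
  | succ m ih =>
      have hch : A * A = A.trace • A - 1 := by rw [ch2, hdet]; simp
      calc A ^ (m+2) = (A^(m+1)) * A := by rw [pow_succ]
        _ = (cheb A.trace (m+1) • A - cheb A.trace m • 1) * A := by rw [ih]
        _ = cheb A.trace (m+1) • (A * A) - cheb A.trace m • A := by
              simp only [sub_mul, smul_mul_assoc, one_mul]
        _ = cheb A.trace (m+1) • (A.trace • A - 1) - cheb A.trace m • A := by rw [hch]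
        _ = cheb A.trace (m+2) • A - cheb A.trace (m+1) • 1 := by
              rw [show cheb A.trace (m+2) = A.trace * cheb A.trace (m+1) - cheb A.trace m from rfl]
              module

private lemma cheb_growth {t : ℤ} (ht : 3 ≤ |t|) : ∀ n : ℕ, |cheb t n| < |cheb t (n+1)| := by
  intro n
  induction n with
  | zero => simp [cheb]
  | succ m ih =>
      have h1 : |cheb t (m+2)| ≥ |t * cheb t (m+1)| - |cheb t m| := by
        have := abs_sub_abs_le_abs_sub (t * cheb t (m+1)) (cheb t m)
        calc |cheb t (m+2)| = |t * cheb t (m+1) - cheb t m| := by rw [show cheb t (m+2) = t * cheb t (m+1) - cheb t m from rfl]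
          _ ≥ |t * cheb t (m+1)| - |cheb t m| := this
      rw [abs_mul] at h1
      have h2 : 0 ≤ |cheb t (m+1)| := abs_nonneg _
      nlinarith [abs_nonneg (cheb t m)]

private lemma cheb_ne_zero {t : ℤ} (ht : 3 ≤ |t|) (n : ℕ) : cheb t (n+1) ≠ 0 := by
  have := cheb_growth ht n
  have h0 : 0 ≤ |cheb t n| := abs_nonneg _
  intro h
  rw [h] at this
  simp at this
  omega

private lemma scalar_of_smul_eq (A : M2Z) {c d : ℤ} (hc : c ≠ 0) (h : c • A = d • (1 : M2Z)) :
    ∃ a : ℤ, A = a • (1 : M2Z) := by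
  refine ⟨A 0 0, ?_⟩
  have h01 : c * A 0 1 = 0 := by have := congrFun (congrFun h 0) 1; simpa using this
  have h10 : c * A 1 0 = 0 := by have := congrFun (congrFun h 1) 0; simpa using this
  have h00 : c * A 0 0 = d := by have := congrFun (congrFun h 0) 0; simpa using this
  have h11 : c * A 1 1 = d := by have := congrFun (congrFun h 1) 1; simpa using this
  have e01 : A 0 1 = 0 := by rcases mul_eq_zero.mp h01 with h | h; exact absurd h hc; exact h
  have e10 : A 1 0 = 0 := by rcases mul_eq_zero.mp h10 with h | h; exact absurd h hc; exact h
  have e11 : A 1 1 = A 0 0 := mul_left_cancel₀ hc (h11.trans h00.symm)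
  ext i j
  fin_cases i <;> fin_cases j <;> simp [Matrix.one_apply, e01, e10, e11]

private lemma trace_small (A : M2Z) (hdet : A.det = 1) {n : ℕ} (hn : n ≠ 0) (hA : A ^ n = 1) :
    |A.trace| ≤ 2 := by
  by_contra hlt
  push_neg at hlt
  have ht : 3 ≤ |A.trace| := by omega
  obtain ⟨m, rfl⟩ : ∃ m, n = m + 1 := ⟨n - 1, (Nat.succ_pred_eq_of_pos (Nat.pos_of_ne_zero hn)).symm⟩
  have hp := cheb_pow A hdet m
  rw [hA] at hp
  have h' : cheb A.trace (m+1) • A = (1 + cheb A.trace m) • (1 : M2Z) := by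
    rw [eq_sub_iff_add_eq] at hp
    rw [add_smul, one_smul]
    linear_combination (norm := module) hp.symm
  obtain ⟨a, ha⟩ := scalar_of_smul_eq A (cheb_ne_zero ht m) h'
  have htr : A.trace = 2 * a := by
    rw [ha, Matrix.trace_smul, Matrix.trace_one]; simp; ring
  have hdet' : a * a = 1 := by
    rw [ha, Matrix.det_smul, Matrix.det_one] at hdet
    simpa [sq] using hdet
  have : a = 1 ∨ a = -1 := by
    rcases Int.isUnit_iff.mp (IsUnit.of_mul_eq_one a hdet') with h | h
    · exact Or.inl h
    · exact Or.inr h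
  rcases this with rfl | rfl <;> rw [htr] at ht <;> simp at ht
private lemma entry_ne (h : (1 : M2Z) = -1) : False := by
  have := congrFun (congrFun h 0) 0
  simp [Matrix.one_apply] at this

private lemma mpow_three {R : Type*} [Ring R] (A : R) : A ^ 3 = A * A * A := by
  rw [pow_succ, pow_two]

private lemma trace2_eq_one (A : M2Z) (hdet : A.det = 1) (htr : A.trace = 2)
    {n : ℕ} (hn : n ≠ 0) (hA : A ^ n = 1) : A = 1 := by
  have hch : A * A = (2:ℤ) • A - 1 := by rw [ch2, hdet, htr]; simp
  have key : ∀ m : ℕ, A ^ m = 1 + (m:ℤ) • (A - 1) := by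
    intro m
    induction m with
    | zero => simp
    | succ k ihk =>
        have hAA : A * A - A = A - 1 := by rw [hch]; module
        have step1 : (1 + (k:ℤ) • (A - 1)) * A = A + (k:ℤ) • (A * A - A) := by
          rw [add_mul, one_mul, smul_mul_assoc, sub_mul, one_mul]
        calc A ^ (k+1) = A ^ k * A := pow_succ A k
          _ = (1 + (k:ℤ) • (A - 1)) * A := by rw [ihk]
          _ = A + (k:ℤ) • (A * A - A) := step1
          _ = A + (k:ℤ) • (A - 1) := by rw [hAA]
          _ = 1 + ((k:ℤ)+1) • (A - 1) := by module
          _ = 1 + ((k+1 : ℕ):ℤ) • (A - 1) := by push_cast; ring_nf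
  have h0 : ((n:ℤ) • (A - 1) : M2Z) = 0 := by
    have hk := key n
    rw [hA] at hk
    linear_combination (norm := module) -hk
  have h1 : A - 1 = 0 := by
    ext i j
    have := congrFun (congrFun h0 i) j
    simp only [Matrix.smul_apply, Matrix.zero_apply, smul_eq_mul] at this
    have hn' : (n : ℤ) ≠ 0 := Int.natCast_ne_zero.mpr hn
    rcases mul_eq_zero.mp this with h | h
    · exact absurd h hn'
    · simpa using h
  exact sub_eq_zero.mp h1

private lemma trace_cases (A : M2Z) (hdet : A.det = 1) {n : ℕ} (hn : n ≠ 0) (hA : A ^ n = 1) :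
    A.trace = -2 ∨ A.trace = -1 ∨ A.trace = 0 ∨ A.trace = 1 ∨ A.trace = 2 := by
  have h := abs_le.mp (trace_small A hdet hn hA)
  omega

private lemma negA_case (A : M2Z) (hdet : A.det = 1) (htr : A.trace = -2)
    {n : ℕ} (hn : n ≠ 0) (hA : A ^ n = 1) : A = -1 := by
  have hd : (-A).det = 1 := by rw [Matrix.det_neg]; simpa using hdet
  have ht : (-A).trace = 2 := by rw [Matrix.trace_neg, htr]; ring
  have hp : (-A) ^ (2*n) = 1 := by
    rw [pow_mul, neg_sq, ← pow_mul, mul_comm, pow_mul, hA, one_pow]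
  have := trace2_eq_one (-A) hd ht (by omega) hp
  linear_combination (norm := module) -this

private lemma invol_eq_neg_one (A : M2Z) (hdet : A.det = 1) (h2 : A * A = 1) (hne : A ≠ 1) :
    A = -1 := by
  have hA2 : A ^ 2 = 1 := by rw [sq]; exact h2
  rcases trace_cases A hdet (two_ne_zero) hA2 with ht | ht | ht | ht | ht
  · exact negA_case A hdet ht two_ne_zero hA2
  · exfalso
    have hch : A * A = (-1:ℤ) • A - 1 := by rw [ch2, hdet, ht]; simp
    rw [h2] at hch
    have hAeq : A = (-2:ℤ) • (1:M2Z) := by linear_combination (norm := module) hch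
    have : A.trace = -4 := by rw [hAeq, Matrix.trace_smul, Matrix.trace_one]; simp
    omega
  · exfalso
    have hch : A * A = (0:ℤ) • A - 1 := by rw [ch2, hdet, ht]; simp
    rw [h2] at hch
    have : (1 : M2Z) = -1 := by linear_combination (norm := module) hch
    exact entry_ne this
  · exfalso
    have hch : A * A = (1:ℤ) • A - 1 := by rw [ch2, hdet, ht]; simp
    rw [h2] at hch
    have hAeq : A = (2:ℤ) • (1:M2Z) := by linear_combination (norm := module) -hch
    have : A.trace = 4 := by rw [hAeq, Matrix.trace_smul, Matrix.trace_one]; simp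
    omega
  · exact absurd (trace2_eq_one A hdet ht two_ne_zero hA2) hne

private lemma neg_one_cube : ((-1 : M2Z)) ^ 3 = -1 := by
  rw [mpow_three]; simp

private lemma order3_sq (A : M2Z) (hdet : A.det = 1) (h3 : A ^ 3 = 1) (hne : A ≠ 1) :
    A * A = -A - 1 := by
  have hA3 : A ^ 3 = A * A * A := mpow_three A
  rcases trace_cases A hdet (three_ne_zero) h3 with ht | ht | ht | ht | ht
  · exfalso
    have hA' := negA_case A hdet ht three_ne_zero h3
    rw [hA', neg_one_cube] at h3
    exact entry_ne h3.symm
  · rw [ch2, hdet, ht]; module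
  · exfalso
    have hch : A * A = -1 := by rw [ch2, hdet, ht]; simp
    have hA' : -A = 1 := by
      rw [← h3, hA3, hch, neg_one_mul]
    have hAeq : A = -1 := by linear_combination (norm := module) -hA'
    rw [hAeq] at ht
    simp [Matrix.trace_neg, Matrix.trace_one] at ht
  · exfalso
    have hch : A * A = (1:ℤ) • A - 1 := by rw [ch2, hdet, ht]; simp
    have hm1 : A ^ 3 = -1 := by
      rw [hA3, hch, sub_mul, smul_mul_assoc, one_mul, hch]
      module
    rw [h3] at hm1
    exact entry_ne hm1
  · exact absurd (trace2_eq_one A hdet ht three_ne_zero h3) hne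

private lemma pow4_or_pow6 (A : M2Z) (hdet : A.det = 1) {n : ℕ} (hn : n ≠ 0) (hA : A ^ n = 1) :
    A ^ 4 = 1 ∨ A ^ 6 = 1 := by
  have hA3 : A ^ 3 = A * A * A := mpow_three A
  rcases trace_cases A hdet hn hA with ht | ht | ht | ht | ht
  · left
    have := negA_case A hdet ht hn hA
    rw [this]; norm_num
  · right
    have hch : A * A = (-1:ℤ) • A - 1 := by rw [ch2, hdet, ht]; simp
    have h3 : A ^ 3 = 1 := by
      rw [hA3, hch, sub_mul, smul_mul_assoc, one_mul, hch]
      module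
    rw [show (6:ℕ) = 3*2 from rfl, pow_mul, h3, one_pow]
  · left
    have hch : A * A = -1 := by rw [ch2, hdet, ht]; simp
    have : A ^ 4 = (A * A) * (A * A) := by
      rw [show (4:ℕ) = 2+2 from rfl, pow_add, pow_two]
    rw [this, hch]; simp
  · right
    have hch : A * A = (1:ℤ) • A - 1 := by rw [ch2, hdet, ht]; simp
    have h3 : A ^ 3 = -1 := by
      rw [hA3, hch, sub_mul, smul_mul_assoc, one_mul, hch]
      module
    rw [show (6:ℕ) = 3*2 from rfl, pow_mul, h3]
    simp
  · left
    rw [trace2_eq_one A hdet ht hn hA]; simp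
private abbrev M2Q := Matrix (Fin 2) (Fin 2) ℚ

private lemma cuberoot {a : ℚ} (h : a ^ 3 = 1) : a = 1 := by
  have h1 : (a - 1) * (a^2 + a + 1) = 0 := by linear_combination h
  rcases mul_eq_zero.mp h1 with h2 | h2
  · linarith [sub_eq_zero.mp h2]
  · nlinarith [sq_nonneg a, sq_nonneg (a+1)]

private lemma trZero (m : M2Q) (d : ℚ) (hd : 0 < d) (hm : m * m = -(d • 1)) : m.trace = 0 := by
  by_contra htr
  have hch := ch2 m
  rw [hm] at hch
  have hsc : m.trace • m = (m.det - d) • (1 : M2Q) := by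
    linear_combination (norm := module) -hch
  have h01 : m.trace * m 0 1 = 0 := by
    have := congrFun (congrFun hsc 0) 1; simpa [Matrix.one_apply] using this
  have h10 : m.trace * m 1 0 = 0 := by
    have := congrFun (congrFun hsc 1) 0; simpa [Matrix.one_apply] using this
  have e01 : m 0 1 = 0 := by rcases mul_eq_zero.mp h01 with h | h; exact absurd h htr; exact h
  have e10 : m 1 0 = 0 := by rcases mul_eq_zero.mp h10 with h | h; exact absurd h htr; exact h
  have hent : (m * m) 0 0 = -d := by rw [hm]; simp [Matrix.one_apply]
  rw [Matrix.mul_apply, Fin.sum_univ_two, e01] at hent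
  nlinarith [sq_nonneg (m 0 0)]

private lemma quatContra (c : ℚ) (hc : 0 < c) (i j : M2Q)
    (hi : i * i = -1) (hj : j * j = -(c • 1)) (hij : i * j = -(j * i)) : False := by
  set k := i * j with hkdef
  have hji : j * i = -k := by rw [hij, neg_neg]
  have hkk : k * k = -(c • 1) := by
    have h1 : k * k = i * (j * i) * j := by rw [hkdef]; noncomm_ring
    rw [h1, hji, hkdef]
    have h2 : i * -(i * j) * j = -(i * i * (j * j)) := by noncomm_ring
    rw [h2, hi, hj]
    simp
  have hik : i * k = -j := by rw [hkdef, ← mul_assoc, hi]; simp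
  have hki : k * i = j := by
    rw [hkdef, mul_assoc, hji, hkdef]
    have : i * -(i * j) = -(i * i) * j := by noncomm_ring
    rw [this, hi]; simp
  have hjk : j * k = c • i := by
    rw [hkdef, ← mul_assoc, hji, hkdef]
    have : -(i * j) * j = -(i * (j * j)) := by noncomm_ring
    rw [this, hj]
    simp [mul_smul_comm]
  have hkj : k * j = -(c • i) := by
    rw [hkdef, mul_assoc, hj]
    simp [mul_smul_comm]
  have ti : i.trace = 0 := trZero i 1 one_pos (by rw [hi]; simp)
  have tj : j.trace = 0 := trZero j c hc hj
  have tk : k.trace = 0 := trZero k c hc hkk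
  have ti' : i 1 1 = -(i 0 0) := by rw [Matrix.trace_fin_two] at ti; linarith
  have tj' : j 1 1 = -(j 0 0) := by rw [Matrix.trace_fin_two] at tj; linarith
  have tk' : k 1 1 = -(k 0 0) := by rw [Matrix.trace_fin_two] at tk; linarith
  have hij' : i * j = k := hkdef.symm
  -- square of a general combination
  have mm : ∀ v : Fin 3 → ℚ,
      (v 0 • i + v 1 • j + v 2 • k) * (v 0 • i + v 1 • j + v 2 • k)
        = -((v 0 ^ 2 + c * v 1 ^ 2 + c * v 2 ^ 2) • (1 : M2Q)) := by
    intro v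
    simp only [add_mul, mul_add, smul_mul_assoc, mul_smul_comm, smul_smul,
      hi, hj, hkk, hij', hji, hik, hki, hjk, hkj]
    module
  -- entries of a combination
  set Φ : Matrix (Fin 3) (Fin 3) ℚ :=
    !![i 0 0, j 0 0, k 0 0; i 0 1, j 0 1, k 0 1; i 1 0, j 1 0, k 1 0] with hPhi
  have hent : ∀ v : Fin 3 → ℚ,
      (v 0 • i + v 1 • j + v 2 • k) 0 0 = Φ.mulVec v 0 ∧
      (v 0 • i + v 1 • j + v 2 • k) 0 1 = Φ.mulVec v 1 ∧
      (v 0 • i + v 1 • j + v 2 • k) 1 0 = Φ.mulVec v 2 ∧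
      (v 0 • i + v 1 • j + v 2 • k) 1 1
        = -((v 0 • i + v 1 • j + v 2 • k) 0 0) := by
    intro v
    refine ⟨?_, ?_, ?_, ?_⟩ <;>
      simp [hPhi, Matrix.mulVec, dotProduct, Fin.sum_univ_three, Matrix.add_apply,
        Matrix.smul_apply, smul_eq_mul, ti', tj', tk'] <;> ring
  by_cases hdet : Φ.det = 0
  · obtain ⟨v, hv0, hveq⟩ := (Matrix.exists_mulVec_eq_zero_iff).mpr hdet
    obtain ⟨e00, e01, e10, e11⟩ := hent v
    rw [hveq] at e00 e01 e10
    simp only [Pi.zero_apply] at e00 e01 e10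
    have hzero : (v 0 • i + v 1 • j + v 2 • k) = 0 := by
      rw [Matrix.eta_fin_two (v 0 • i + v 1 • j + v 2 • k), e00, e01, e10, e11, e00]
      norm_num
      ext a b
      fin_cases a <;> fin_cases b <;> simp
    have := mm v
    rw [hzero] at this
    have h00 : (0 : ℚ) = -((v 0 ^ 2 + c * v 1 ^ 2 + c * v 2 ^ 2) * 1) := by
      have := congrFun (congrFun this 0) 0
      simpa [Matrix.one_apply] using this
    have t0 : (0:ℚ) ≤ v 0 ^ 2 := sq_nonneg _
    have t1 : (0:ℚ) ≤ c * v 1 ^ 2 := mul_nonneg hc.le (sq_nonneg _)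
    have t2 : (0:ℚ) ≤ c * v 2 ^ 2 := mul_nonneg hc.le (sq_nonneg _)
    have hv00 : v 0 = 0 := by
      have h' : v 0 ^ 2 = 0 := by linarith
      exact (pow_eq_zero_iff two_ne_zero).mp h'
    have hv01 : v 1 = 0 := by
      have h' : c * v 1 ^ 2 = 0 := by linarith
      rcases mul_eq_zero.mp h' with h'' | h''
      · exact absurd h'' hc.ne'
      · exact (pow_eq_zero_iff two_ne_zero).mp h''
    have hv02 : v 2 = 0 := by
      have h' : c * v 2 ^ 2 = 0 := by linarith
      rcases mul_eq_zero.mp h' with h'' | h''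
      · exact absurd h'' hc.ne'
      · exact (pow_eq_zero_iff two_ne_zero).mp h''
    apply hv0
    funext a
    fin_cases a <;> assumption
  · set v : Fin 3 → ℚ := Φ⁻¹.mulVec ![1, 0, 0] with hv
    have hsolve : Φ.mulVec v = ![1, 0, 0] := by
      rw [hv, Matrix.mulVec_mulVec, Matrix.mul_nonsing_inv _ (isUnit_iff_ne_zero.mpr hdet),
        Matrix.one_mulVec]
    obtain ⟨e00, e01, e10, e11⟩ := hent v
    rw [hsolve] at e00 e01 e10
    simp only [Matrix.cons_val_zero, Matrix.cons_val_one, Matrix.head_cons] at e00 e01 e10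
    set m := v 0 • i + v 1 • j + v 2 • k with hm
    have hE : m * m = 1 := by
      have e11' : m 1 1 = -1 := by rw [e11, e00]
      rw [Matrix.eta_fin_two m, e00, e01, e10, e11']
      ext a b
      rw [Matrix.mul_apply, Fin.sum_univ_two]
      fin_cases a <;> fin_cases b <;> simp
    have := mm v
    rw [hE] at this
    have h00 : (1 : ℚ) = -((v 0 ^ 2 + c * v 1 ^ 2 + c * v 2 ^ 2) * 1) := by
      have := congrFun (congrFun this 0) 0
      simpa [Matrix.one_apply] using this
    have t0 : (0:ℚ) ≤ v 0 ^ 2 := sq_nonneg _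
    have t1 : (0:ℚ) ≤ c * v 1 ^ 2 := mul_nonneg hc.le (sq_nonneg _)
    have t2 : (0:ℚ) ≤ c * v 2 ^ 2 := mul_nonneg hc.le (sq_nonneg _)
    linarith
private lemma comm3 (x y : M2Q) (hx : x * x = -x - 1) (hcomm : x * y = y * x)
    (hy : y * y * y = 1) : y = 1 ∨ y = x ∨ y = x * x := by
  have hr : x 1 0 ≠ 0 := by
    intro hr0
    have h11 : (x * x) 1 1 = (-x - 1) 1 1 := by rw [hx]
    rw [Matrix.mul_apply, Fin.sum_univ_two, hr0] at h11
    simp [Matrix.one_apply] at h11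
    nlinarith [sq_nonneg (x 1 1), sq_nonneg (x 1 1 + 1)]
  set b : ℚ := y 1 0 / x 1 0 with hbdef
  set a : ℚ := y 0 0 - b * x 0 0 with hadef
  have hc00 : (x * y) 0 0 = (y * x) 0 0 := by rw [hcomm]
  have hc10 : (x * y) 1 0 = (y * x) 1 0 := by rw [hcomm]
  rw [Matrix.mul_apply, Fin.sum_univ_two] at hc00 hc10
  rw [Matrix.mul_apply, Fin.sum_univ_two] at hc00 hc10
  have hrep : y = a • (1 : M2Q) + b • x := by
    rw [Matrix.eta_fin_two y]
    have e00 : y 0 0 = a + b * x 0 0 := by rw [hadef]; ring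
    have e10 : y 1 0 = b * x 1 0 := by rw [hbdef]; field_simp
    have e01 : y 0 1 = b * x 0 1 := by
      rw [hbdef]
      field_simp
      linear_combination x 0 1 * y 1 0 - hc00
    have e11 : y 1 1 = a + b * x 1 1 := by
      rw [hadef, hbdef]
      field_simp
      linear_combination -hc10
    rw [e00, e01, e10, e11]
    ext p q
    fin_cases p <;> fin_cases q <;>
      simp [Matrix.one_apply] <;> ring
  have indep : ∀ C1 C2 : ℚ, C1 • (1 : M2Q) + C2 • x = 1 → C2 = 0 ∧ C1 = 1 := by
    intro C1 C2 h
    have h10 : C2 * x 1 0 = 0 := by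
      have := congrFun (congrFun h 1) 0; simpa [Matrix.one_apply] using this
    have hC2 : C2 = 0 := by
      rcases mul_eq_zero.mp h10 with h' | h'
      · exact h'
      · exact absurd h' hr
    refine ⟨hC2, ?_⟩
    have h00 : C1 + C2 * x 0 0 = 1 := by
      have := congrFun (congrFun h 0) 0; simpa [Matrix.one_apply] using this
    rw [hC2] at h00; linarith
  have hsq : y * y = (a^2 - b^2) • (1 : M2Q) + (2*a*b - b^2) • x := by
    rw [hrep]
    simp only [add_mul, mul_add, smul_mul_assoc, mul_smul_comm, smul_smul, mul_one, one_mul]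
    rw [hx]
    module
  have hcube0 : y * y * y = (a^3 - 3*a*b^2 + b^3) • (1 : M2Q) + (3*a^2*b - 3*a*b^2) • x := by
    rw [hsq, hrep]
    simp only [add_mul, mul_add, smul_mul_assoc, mul_smul_comm, smul_smul, mul_one, one_mul]
    rw [hx]
    module
  have hcube : (a^3 - 3*a*b^2 + b^3) • (1 : M2Q) + (3*a^2*b - 3*a*b^2) • x = 1 :=
    hcube0.symm.trans hy
  obtain ⟨hC2, hC1⟩ := indep _ _ hcube
  have hfac : 3 * (a * b * (a - b)) = 0 := by linear_combination hC2
  have habs : a * b * (a - b) = 0 := by linarith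
  rcases mul_eq_zero.mp habs with hab | hab'
  · rcases mul_eq_zero.mp hab with ha0 | hb0
    · -- a = 0 : y = x
      right; left
      have hb3 : b^3 = 1 := by rw [ha0] at hC1; linarith
      have hb1 : b = 1 := cuberoot hb3
      rw [hrep, ha0, hb1]; simp
    · -- b = 0 : y = 1
      left
      have ha3 : a^3 = 1 := by rw [hb0] at hC1; linarith
      have ha1 : a = 1 := cuberoot ha3
      rw [hrep, ha1, hb0]; simp
  · -- a = b : y = x²
    right; right
    have hab : a = b := sub_eq_zero.mp hab'
    have ha3 : (-a)^3 = 1 := by rw [← hab] at hC1; linear_combination hC1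
    have ha1 : a = -1 := by have := cuberoot ha3; linarith
    rw [hrep, ← hab, ha1, hx]
    module
section GroupPart

variable {G : Type*} [Group G] [Finite G]

private lemma conj_mem_of_index_two {H : Subgroup G} (h2 : H.index = 2) {a : G} (g : G)
    (ha : a ∈ H) : g * a * g⁻¹ ∈ H := by
  rw [Subgroup.mul_mem_iff_of_index_two h2, Subgroup.mul_mem_iff_of_index_two h2,
    Subgroup.inv_mem_iff]
  simp [ha]

private lemma exists_two_nontriv (h : 2 < Nat.card G) :
    ∃ a b : G, a ≠ 1 ∧ b ≠ 1 ∧ a ≠ b := by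
  by_contra hcon
  push_neg at hcon
  classical
  have hinj : Function.Injective (fun g : G => (decide (g = 1) : Bool)) := by
    intro a b hab
    simp only [decide_eq_decide] at hab
    by_cases ha : a = 1
    · rw [ha, (hab.mp ha).symm]
    · have hb : b ≠ 1 := fun hb1 => ha (hab.mpr hb1)
      exact hcon a b ha hb
  have := Nat.card_le_card_of_injective _ hinj
  simp [Nat.card_eq_fintype_card] at this
  omega

private lemma dvd4_cases {d : ℕ} (h : d ∣ 4) : d = 1 ∨ d = 2 ∨ d = 4 := by
  have h4 : d ∈ Nat.divisors 4 := Nat.mem_divisors.mpr ⟨h, by norm_num⟩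
  fin_cases h4 <;> simp

private lemma dvd6_cases {d : ℕ} (h : d ∣ 6) : d = 1 ∨ d = 2 ∨ d = 3 ∨ d = 6 := by
  have h6 : d ∈ Nat.divisors 6 := Nat.mem_divisors.mpr ⟨h, by norm_num⟩
  fin_cases h6 <;> simp

private lemma pow4_decomp {M : Type*} [Monoid M] (x : M) : (x * x) * (x * x) = x ^ 4 := by
  rw [show (4:ℕ) = 2*2 from rfl, pow_mul, pow_two, pow_two]

private lemma pow_ne_one_of_order {x : G} {m r : ℕ} (hx : orderOf x = m) (hnd : ¬ (m ∣ r))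
    (h : x ^ r = 1) : False := by
  have := orderOf_dvd_iff_pow_eq_one.mpr h
  rw [hx] at this
  exact hnd this

private lemma exists_order_four
    (hB : ∀ g h : G, g * g = 1 → h * h = 1 → g ≠ 1 → h ≠ 1 → g = h)
    (S : Subgroup G) (hgt : 2 < Nat.card S)
    (hdvd4 : ∀ s : G, s ∈ S → orderOf s ∣ 4) : ∃ u ∈ S, orderOf u = 4 := by
  by_contra hcon
  push_neg at hcon
  have hall : ∀ s : G, s ∈ S → s * s = 1 := by
    intro s hs
    rcases dvd4_cases (hdvd4 s hs) with h1 | h2 | h4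
    · have : s = 1 := orderOf_eq_one_iff.mp h1
      rw [this, one_mul]
    · have : s ^ 2 = 1 := by rw [← h2]; exact pow_orderOf_eq_one s
      rw [← pow_two]; exact this
    · exact absurd h4 (hcon s hs)
  obtain ⟨a, b, ha1, hb1, hab⟩ := exists_two_nontriv (G := S) hgt
  have haG : (a : G) ≠ 1 := fun h => ha1 (by exact_mod_cast Subtype.ext h)
  have hbG : (b : G) ≠ 1 := fun h => hb1 (by exact_mod_cast Subtype.ext h)
  have := hB (a : G) (b : G) (hall _ a.2) (hall _ b.2) haG hbG
  exact hab (Subtype.ext this)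

private lemma no_subgroup_eight
    (hA : ∀ g : G, orderOf g ∣ 4 ∨ orderOf g ∣ 6)
    (hB : ∀ g h : G, g * g = 1 → h * h = 1 → g ≠ 1 → h ≠ 1 → g = h)
    (hD : ∀ x y : G, orderOf x = 4 → orderOf y = 4 → y * x = x⁻¹ * y → False)
    (S : Subgroup G) (hS : Nat.card S = 8) : False := by
  have horder : ∀ s : G, s ∈ S → orderOf s ∣ 4 := by
    intro s hs
    have h8 : orderOf s ∣ 8 := by rw [← hS]; exact Subgroup.orderOf_dvd_natCard S hs
    rcases hA s with h4 | h6
    · exact h4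
    · have : orderOf s ∣ Nat.gcd 6 8 := Nat.dvd_gcd h6 h8
      norm_num at this
      exact this.trans (by norm_num)
  obtain ⟨x, hxS, hx4⟩ := exists_order_four hB S (by rw [hS]; norm_num) horder
  have hx4pow : x ^ 4 = 1 := by rw [← hx4]; exact pow_orderOf_eq_one x
  have hx2ne : x * x ≠ 1 := by
    intro h
    exact pow_ne_one_of_order (r := 2) hx4 (by norm_num) (by rw [pow_two]; exact h)
  have hxxZ : x * x ∈ Subgroup.zpowers x := by
    have : x ^ (2:ℕ) ∈ Subgroup.zpowers x := Subgroup.pow_mem _ (Subgroup.mem_zpowers x) 2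
    rwa [pow_two] at this
  -- find y in S not a power of x
  obtain ⟨y, hyS, hyZ⟩ : ∃ y ∈ S, y ∉ Subgroup.zpowers x := by
    by_contra hcon
    push_neg at hcon
    have hle : S ≤ Subgroup.zpowers x := hcon
    have hdvd := Subgroup.card_dvd_of_le hle
    rw [hS, Nat.card_zpowers, hx4] at hdvd
    norm_num at hdvd
  have hyne : y ≠ 1 := fun h => hyZ (h ▸ Subgroup.one_mem _)
  have hy2ne : y * y ≠ 1 := by
    intro h
    exact hyZ ((hB y (x*x) h (by rw [pow4_decomp x, hx4pow])
      hyne hx2ne) ▸ hxxZ)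
  have hy4 : orderOf y = 4 := by
    rcases dvd4_cases (horder y hyS) with h1 | h2 | h4
    · exact absurd (orderOf_eq_one_iff.mp h1) hyne
    · exfalso
      apply hy2ne
      rw [← pow_two, ← h2]
      exact pow_orderOf_eq_one y
    · exact h4
  have hyy : y * y = x * x :=
    hB (y*y) (x*x) (by rw [pow4_decomp y, ← hy4]; exact pow_orderOf_eq_one y)
      (by rw [pow4_decomp x, hx4pow]) hy2ne hx2ne
  -- index two argument inside S
  set x' : ↥S := ⟨x, hxS⟩ with hx'
  set y' : ↥S := ⟨y, hyS⟩ with hy'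
  have hx'4 : orderOf x' = 4 := (Subgroup.orderOf_coe x').symm.trans hx4
  have hidx : (Subgroup.zpowers x').index = 2 := by
    have := Subgroup.card_mul_index (Subgroup.zpowers x')
    rw [Nat.card_zpowers, hx'4, hS] at this
    omega
  have hconj : y' * x' * y'⁻¹ ∈ Subgroup.zpowers x' :=
    conj_mem_of_index_two hidx y' (Subgroup.mem_zpowers x')
  obtain ⟨k, hk⟩ := Subgroup.mem_zpowers_iff.mp hconj
  have hkG : x ^ k = y * x * y⁻¹ := by
    have := congrArg (Subtype.val) hk
    simpa [hx', hy'] using this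
  have hmod : x ^ (k % (4:ℤ)) = y * x * y⁻¹ := by
    have h := zpow_mod_orderOf x k
    rw [hx4] at h
    norm_num at h
    rw [h, hkG]
  have hrange : k % 4 = 0 ∨ k % 4 = 1 ∨ k % 4 = 2 ∨ k % 4 = 3 := by omega
  rcases hrange with hr | hr | hr | hr <;> rw [hr] at hmod
  · -- y x y⁻¹ = 1 : impossible
    simp only [zpow_zero] at hmod
    have hx1 : x = 1 := by
      have h1 : y * x * y⁻¹ = 1 := hmod.symm
      calc x = y⁻¹ * (y * x * y⁻¹) * y := by group
        _ = y⁻¹ * 1 * y := by rw [h1]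
        _ = 1 := by group
    exact pow_ne_one_of_order (r := 1) hx4 (by norm_num) (by rw [hx1]; simp)
  · -- y x y⁻¹ = x : commuting case
    have hcomm : y * x = x * y := by
      have h1 : y * x * y⁻¹ = x := by rw [← hmod, zpow_one]
      calc y * x = (y * x * y⁻¹) * y := by group
        _ = x * y := by rw [h1]
    have hw : (x * y⁻¹) * (x * y⁻¹) = 1 := by
      have hyinv : y⁻¹ * x = x * y⁻¹ := by
        calc y⁻¹ * x = y⁻¹ * (x * y) * y⁻¹ := by group
          _ = y⁻¹ * (y * x) * y⁻¹ := by rw [hcomm]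
          _ = x * y⁻¹ := by group
      calc (x * y⁻¹) * (x * y⁻¹) = x * (y⁻¹ * x) * y⁻¹ := by group
        _ = x * (x * y⁻¹) * y⁻¹ := by rw [hyinv]
        _ = (x * x) * (y * y)⁻¹ := by group
        _ = (x * x) * (x * x)⁻¹ := by rw [hyy]
        _ = 1 := by group
    have hwne : x * y⁻¹ ≠ 1 := by
      intro h
      have : y = x := by
        calc y = (x * y⁻¹)⁻¹ * x := by group
          _ = 1⁻¹ * x := by rw [h]
          _ = x := by group
      exact hyZ (this ▸ Subgroup.mem_zpowers x)
    have := hB (x * y⁻¹) (x * x) hw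
      (by rw [pow4_decomp x, hx4pow]) hwne hx2ne
    apply hyZ
    have hy_eq : y = x⁻¹ := by
      have h1 : x * y⁻¹ = x * x := this
      have h2 : y⁻¹ = x := by
        calc y⁻¹ = x⁻¹ * (x * y⁻¹) := by group
          _ = x⁻¹ * (x * x) := by rw [h1]
          _ = x := by group
      calc y = (y⁻¹)⁻¹ := by group
        _ = x⁻¹ := by rw [h2]
    rw [hy_eq]
    exact Subgroup.inv_mem _ (Subgroup.mem_zpowers x)
  · -- y x y⁻¹ = x² : then x² = 1, contradiction
    have h2 : y * x * y⁻¹ = x^2 := by rw [← hmod]; norm_cast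
    have hsq : y * (x * x) * y⁻¹ = x ^ 4 := by
      calc y * (x * x) * y⁻¹ = (y * x * y⁻¹) * (y * x * y⁻¹) := by group
        _ = x^2 * x^2 := by rw [h2]
        _ = x^4 := by rw [← pow_two]; rw [← pow_mul]
    rw [hx4pow] at hsq
    apply hx2ne
    calc x * x = y⁻¹ * (y * (x * x) * y⁻¹) * y := by group
      _ = y⁻¹ * 1 * y := by rw [hsq]
      _ = 1 := by group
  · -- y x y⁻¹ = x³ = x⁻¹ : quaternion case
    have h3 : y * x * y⁻¹ = x^3 := by rw [← hmod]; norm_cast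
    have hx3 : x^(3:ℕ) = x⁻¹ := by
      apply eq_inv_of_mul_eq_one_left
      rw [(pow_succ x 3).symm]
      exact hx4pow
    have hrel : y * x = x⁻¹ * y := by
      calc y * x = (y * x * y⁻¹) * y := by group
        _ = x^(3:ℕ) * y := by rw [h3]
        _ = x⁻¹ * y := by rw [hx3]
    exact hD x y hx4 hy4 hrel

end GroupPart
section GroupPart2

variable {G : Type*} [Group G] [Finite G]

private lemma no_subgroup_nine
    (hA : ∀ g : G, orderOf g ∣ 4 ∨ orderOf g ∣ 6)
    (hC : ∀ x y : G, orderOf x = 3 → y ^ 3 = 1 → x * y = y * x → y = 1 ∨ y = x ∨ y = x ^ 2)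
    (S : Subgroup G) (hS : Nat.card S = 9) : False := by
  have horder : ∀ s : G, s ∈ S → orderOf s ∣ 3 := by
    intro s hs
    have h9 : orderOf s ∣ 9 := by rw [← hS]; exact Subgroup.orderOf_dvd_natCard S hs
    rcases hA s with h4 | h6
    · have h1 : orderOf s ∣ Nat.gcd 9 4 := Nat.dvd_gcd h9 h4
      norm_num at h1
      rw [h1]; norm_num
    · have h1 : orderOf s ∣ Nat.gcd 9 6 := Nat.dvd_gcd h9 h6
      norm_num at h1
      exact h1
  have hpS : IsPGroup 3 ↥S := IsPGroup.of_card (n := 2) (by rw [hS]; norm_num)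
  haveI hnt : Nontrivial ↥S := by
    apply Finite.one_lt_card_iff_nontrivial.mp
    rw [hS]; norm_num
  haveI : Nontrivial (Subgroup.center ↥S) := hpS.center_nontrivial
  obtain ⟨z', hz'⟩ := exists_ne (1 : Subgroup.center ↥S)
  set z : G := ((z' : ↥S) : G) with hzdef
  have hzS : z ∈ S := (z' : ↥S).2
  have hzne : z ≠ 1 := by
    intro h
    exact hz' (Subtype.ext (Subtype.ext h))
  have hz3 : orderOf z = 3 := by
    rcases (Nat.prime_three).eq_one_or_self_of_dvd _ (horder z hzS) with h | h
    · exact absurd (orderOf_eq_one_iff.mp h) hzne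
    · exact h
  have hcomm : ∀ s : ↥S, s * (z' : ↥S) = (z' : ↥S) * s := fun s =>
    Subgroup.mem_center_iff.mp z'.2 s
  have hle : ∀ y : G, y ∈ S → y ∈ Subgroup.zpowers z := by
    intro y hy
    have hy3 : y ^ 3 = 1 := orderOf_dvd_iff_pow_eq_one.mp (horder y hy)
    have hyc : z * y = y * z := by
      have h1 := hcomm ⟨y, hy⟩
      have h2 := congrArg Subtype.val h1
      exact h2.symm
    rcases hC z y hz3 hy3 hyc with h1 | h1 | h1
    · rw [h1]; exact Subgroup.one_mem _
    · rw [h1]; exact Subgroup.mem_zpowers z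
    · rw [h1]; exact Subgroup.pow_mem _ (Subgroup.mem_zpowers z) 2
  have hdvd := Subgroup.card_dvd_of_le (fun y hy => hle y hy)
  rw [hS, Nat.card_zpowers, hz3] at hdvd
  norm_num at hdvd

private lemma no_card_twelve
    (hA : ∀ g : G, orderOf g ∣ 4 ∨ orderOf g ∣ 6)
    (hB : ∀ g h : G, g * g = 1 → h * h = 1 → g ≠ 1 → h ≠ 1 → g = h)
    (hE : ∀ x u : G, orderOf x = 3 → orderOf u = 4 → u * x = x ^ 2 * u → False)
    (hcard : Nat.card G = 12) : False := by
  haveI : Fact (Nat.Prime 3) := ⟨by norm_num⟩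
  haveI : Fact (Nat.Prime 2) := ⟨by norm_num⟩
  obtain ⟨x, hx3⟩ := exists_prime_orderOf_dvd_card' 3 (by rw [hcard]; norm_num)
  obtain ⟨S, hS⟩ := Sylow.exists_subgroup_card_pow_prime 2 (n := 2) (by rw [hcard]; norm_num)
  have horder4 : ∀ s : G, s ∈ S → orderOf s ∣ 4 := by
    intro s hs
    have := Subgroup.orderOf_dvd_natCard S hs
    rwa [hS] at this
  obtain ⟨u, huS, hu4⟩ := exists_order_four hB S (by rw [hS]; norm_num) horder4
  have hu4pow : u ^ 4 = 1 := by rw [← hu4]; exact pow_orderOf_eq_one u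
  set z := u * u with hzdef
  have hz2 : z * z = 1 := by rw [hzdef, pow4_decomp u]; exact hu4pow
  have hzne : z ≠ 1 := fun h =>
    pow_ne_one_of_order (r := 2) hu4 (by norm_num) (by rw [pow_two]; exact h)
  have hzc : ∀ g : G, g * z = z * g := by
    intro g
    have hconj2 : (g * z * g⁻¹) * (g * z * g⁻¹) = 1 := by
      calc (g*z*g⁻¹)*(g*z*g⁻¹) = g * (z*z) * g⁻¹ := by group
        _ = 1 := by rw [hz2]; group
    have hconjne : g * z * g⁻¹ ≠ 1 := by
      intro h
      apply hzne
      calc z = g⁻¹ * (g*z*g⁻¹) * g := by group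
        _ = 1 := by rw [h]; group
    have heq := hB _ _ hconj2 hz2 hconjne hzne
    calc g * z = (g*z*g⁻¹) * g := by group
      _ = z * g := by rw [heq]
  have hzx : z * x = x * z := (hzc x).symm
  have hcomm : Commute z x := hzx
  set w := z * x with hwdef
  have hwpow : ∀ n : ℕ, w ^ n = z ^ n * x ^ n := fun n => hcomm.mul_pow n
  have hx3pow : x ^ 3 = 1 := by rw [← hx3]; exact pow_orderOf_eq_one x
  have hz2' : z ^ 2 = 1 := by rw [pow_two]; exact hz2
  have hz3' : z ^ 3 = z := by
    rw [show (3:ℕ) = 2+1 from rfl, pow_succ, hz2', one_mul]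
  have hz4' : z ^ 4 = 1 := by
    rw [show (4:ℕ) = 2*2 from rfl, pow_mul, hz2', one_pow]
  have hx4' : x ^ 4 = x := by
    rw [show (4:ℕ) = 3+1 from rfl, pow_succ, hx3pow, one_mul]
  have hx6' : x ^ 6 = 1 := by
    rw [show (6:ℕ) = 3*2 from rfl, pow_mul, hx3pow, one_pow]
  have hz6' : z ^ 6 = 1 := by
    rw [show (6:ℕ) = 2*3 from rfl, pow_mul, hz2', one_pow]
  have hw6 : w ^ 6 = 1 := by rw [hwpow 6, hz6', hx6', one_mul]
  have hw2 : w ^ 2 = x ^ 2 := by rw [hwpow 2, hz2', one_mul]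
  have hw3 : w ^ 3 = z := by rw [hwpow 3, hx3pow, mul_one, hz3']
  have hw4 : w ^ 4 = x := by rw [hwpow 4, hz4', hx4', one_mul]
  have hw5 : w ^ 5 = z * x ^ 2 := by
    rw [show (5:ℕ) = 3+2 from rfl, pow_add, hw3, hw2]
  have hx2ne : x ^ 2 ≠ 1 := fun h => pow_ne_one_of_order (r := 2) hx3 (by norm_num) h
  have hworder : orderOf w = 6 := by
    have hdvd : orderOf w ∣ 6 := orderOf_dvd_iff_pow_eq_one.mpr hw6
    rcases dvd6_cases hdvd with h | h | h | h
    · exfalso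
      apply hx2ne
      rw [← hw2, orderOf_eq_one_iff.mp h]
      norm_num
    · exfalso
      apply hx2ne
      rw [← hw2, ← h]
      exact pow_orderOf_eq_one w
    · exfalso
      apply hzne
      rw [← hw3, ← h]
      exact pow_orderOf_eq_one w
    · exact h
  have hxW : x ∈ Subgroup.zpowers w := by
    rw [← hw4]; exact Subgroup.pow_mem _ (Subgroup.mem_zpowers w) 4
  have hidx : (Subgroup.zpowers w).index = 2 := by
    have := Subgroup.card_mul_index (Subgroup.zpowers w)
    rw [Nat.card_zpowers, hworder, hcard] at this
    omega
  have hconj : u * x * u⁻¹ ∈ Subgroup.zpowers w := conj_mem_of_index_two hidx u hxW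
  obtain ⟨k, hk⟩ := Subgroup.mem_zpowers_iff.mp hconj
  have hg3 : (u * x * u⁻¹) ^ 3 = 1 := by
    rw [conj_pow, hx3pow, mul_one, mul_inv_cancel]
  have hgne : u * x * u⁻¹ ≠ 1 := by
    intro h
    have hx1 : x = 1 := by
      calc x = u⁻¹ * (u*x*u⁻¹) * u := by group
        _ = 1 := by rw [h]; group
    rw [hx1] at hx3
    simp at hx3
  have hmod : w ^ (k % (6:ℤ)) = u * x * u⁻¹ := by
    have h := zpow_mod_orderOf w k
    rw [hworder] at h
    norm_num at h
    rw [h, hk]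
  have hrange : k % 6 = 0 ∨ k % 6 = 1 ∨ k % 6 = 2 ∨ k % 6 = 3 ∨ k % 6 = 4 ∨ k % 6 = 5 := by
    omega
  rcases hrange with hr | hr | hr | hr | hr | hr <;> rw [hr] at hmod
  · rw [zpow_zero] at hmod
    exact hgne hmod.symm
  · rw [zpow_one] at hmod
    apply hzne
    rw [← hw3, hmod]
    exact hg3
  · have hg : u * x * u⁻¹ = x ^ 2 := by rw [← hmod, ← hw2]; norm_cast
    apply hE x u hx3 hu4
    calc u * x = (u*x*u⁻¹) * u := by group
      _ = x^2 * u := by rw [hg]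
  · have hg : u * x * u⁻¹ = z := by rw [← hmod, ← hw3]; norm_cast
    apply hzne
    rw [← hz3', ← hg]
    exact hg3
  · have hg : u * x * u⁻¹ = x := by rw [← hmod, ← hw4]; norm_cast
    have hcux : Commute u x := by
      show u * x = x * u
      calc u * x = (u*x*u⁻¹) * u := by group
        _ = x * u := by rw [hg]
    have hco : Nat.Coprime (orderOf u) (orderOf x) := by
      rw [hu4, hx3]
      decide
    have h12 : orderOf (u * x) = 12 := by
      rw [hcux.orderOf_mul_eq_mul_orderOf_of_coprime hco, hu4, hx3]
    rcases hA (u * x) with h | h <;> rw [h12] at h <;> norm_num at h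
  · have hg : u * x * u⁻¹ = z * x ^ 2 := by rw [← hmod, ← hw5]; norm_cast
    apply hzne
    have hcz2 : Commute z (x ^ 2) := (hcomm.pow_right 2)
    have : (z * x^2) ^ 3 = 1 := by rw [← hg]; exact hg3
    rw [hcz2.mul_pow 3, hz3'] at this
    rw [show ((x^2)^3 : G) = (x^3)^2 from by rw [← pow_mul, ← pow_mul, show 2*3 = 3*2 from rfl],
      hx3pow, one_pow, mul_one] at this
    exact this

end GroupPart2
section GroupPart3

variable {G : Type*} [Group G] [Finite G]

private lemma dvd12_cases {d : ℕ} (h : d ∣ 12) :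
    d = 1 ∨ d = 2 ∨ d = 3 ∨ d = 4 ∨ d = 6 ∨ d = 12 := by
  have h12 : d ∈ Nat.divisors 12 := Nat.mem_divisors.mpr ⟨h, by norm_num⟩
  fin_cases h12 <;> simp

private lemma card_le_six
    (hA : ∀ g : G, orderOf g ∣ 4 ∨ orderOf g ∣ 6)
    (hB : ∀ g h : G, g * g = 1 → h * h = 1 → g ≠ 1 → h ≠ 1 → g = h)
    (hC : ∀ x y : G, orderOf x = 3 → y ^ 3 = 1 → x * y = y * x → y = 1 ∨ y = x ∨ y = x ^ 2)
    (hD : ∀ x y : G, orderOf x = 4 → orderOf y = 4 → y * x = x⁻¹ * y → False)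
    (hE : ∀ x u : G, orderOf x = 3 → orderOf u = 4 → u * x = x ^ 2 * u → False) :
    Nat.card G ≤ 6 := by
  have h12 : Nat.card G ∣ 12 := by
    rw [Nat.dvd_iff_prime_pow_dvd_dvd]
    intro p k hp hpk
    by_cases hk0 : k = 0
    · subst hk0; simpa using one_dvd _
    have hpn : p.Prime := hp
    haveI : Fact p.Prime := ⟨hpn⟩
    have hpdvd : p ∣ Nat.card G := dvd_trans (dvd_pow_self p hk0) hpk
    obtain ⟨g, hg⟩ := exists_prime_orderOf_dvd_card' p hpdvd
    have hp23 : p = 2 ∨ p = 3 := by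
      rcases hA g with h | h
      · rw [hg] at h
        left
        have h2 : p ∣ 2 ^ 2 := by norm_num; exact h
        have := hpn.dvd_of_dvd_pow h2
        exact (Nat.prime_dvd_prime_iff_eq hpn Nat.prime_two).mp this
      · rw [hg] at h
        have h6 : p ∣ 2 * 3 := by norm_num; exact h
        rcases (Nat.Prime.dvd_mul hpn).mp h6 with h' | h'
        · exact Or.inl ((Nat.prime_dvd_prime_iff_eq hpn Nat.prime_two).mp h')
        · exact Or.inr ((Nat.prime_dvd_prime_iff_eq hpn Nat.prime_three).mp h')
    rcases hp23 with rfl | rfl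
    · have hk2 : k ≤ 2 := by
        by_contra hgt
        push_neg at hgt
        have h8 : (2:ℕ) ^ 3 ∣ Nat.card G := dvd_trans (pow_dvd_pow 2 (by omega)) hpk
        obtain ⟨S, hScard⟩ := Sylow.exists_subgroup_card_pow_prime 2 (n := 3) h8
        exact no_subgroup_eight hA hB hD S (by rw [hScard]; norm_num)
      calc (2:ℕ)^k ∣ 2^2 := pow_dvd_pow 2 hk2
        _ ∣ 12 := by norm_num
    · have hk1 : k ≤ 1 := by
        by_contra hgt
        push_neg at hgt
        have h9 : (3:ℕ) ^ 2 ∣ Nat.card G := dvd_trans (pow_dvd_pow 3 (by omega)) hpk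
        obtain ⟨S, hScard⟩ := Sylow.exists_subgroup_card_pow_prime 3 (n := 2) h9
        exact no_subgroup_nine hA hC S (by rw [hScard]; norm_num)
      calc (3:ℕ)^k ∣ 3^1 := pow_dvd_pow 3 hk1
        _ ∣ 12 := by norm_num
  have hne12 : Nat.card G ≠ 12 := fun h => no_card_twelve hA hB hE h
  rcases dvd12_cases h12 with h | h | h | h | h | h <;> omega

end GroupPart3
section Transfer

private noncomputable abbrev psiQ : M2Z →+* M2Q := (Int.castRingHom ℚ).mapMatrix

private lemma psiQ_inj : Function.Injective psiQ := by
  intro A B h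
  ext i j
  have h' : (psiQ A) i j = (psiQ B) i j := by rw [h]
  simp only [psiQ, RingHom.mapMatrix_apply, Matrix.map_apply, Int.coe_castRingHom,
    Int.cast_inj] at h'
  exact h'

/-- every finite subgroup of `GL(2, ℤ)` has order at most `12`. -/
theorem finite_subgroup_GL2Z_card_le_twelve
    (H : Subgroup (GL (Fin 2) ℤ)) [Finite H] :
    Nat.card H ≤ 12 := by
  classical
  set φ : ↥H →* ℤˣ := (Matrix.GeneralLinearGroup.det).comp H.subtype with hφ
  set K : Subgroup ↥H := φ.ker with hK
  set F : ↥K →* M2Z :=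
    (Units.coeHom (Matrix (Fin 2) (Fin 2) ℤ)).comp ((H.subtype).comp K.subtype) with hF
  have hFinj : Function.Injective F := by
    intro a b h
    apply Subtype.ext
    apply Subtype.ext
    exact Units.ext h
  have hmm : ∀ a b : ↥K, psiQ (F (a * b)) = psiQ (F a) * psiQ (F b) := by
    intro a b
    rw [_root_.map_mul, _root_.map_mul]
  have hdet : ∀ k : ↥K, (F k).det = 1 := by
    intro k
    have hk : φ (k : ↥H) = 1 := k.2
    have h1 : (F k).det = ((φ (k : ↥H) : ℤˣ) : ℤ) := by rw [hφ]; rfl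
    rw [h1, hk]
    rfl
  have hpowone : ∀ (g : ↥K) (m : ℕ), g ^ m = 1 ↔ (F g) ^ m = 1 := by
    intro g m
    constructor
    · intro h
      rw [← _root_.map_pow, h, _root_.map_one]
    · intro h
      apply hFinj
      rw [_root_.map_pow, h, _root_.map_one]
  have hAhyp : ∀ g : ↥K, orderOf g ∣ 4 ∨ orderOf g ∣ 6 := by
    intro g
    have hn : orderOf g ≠ 0 := (orderOf_pos g).ne'
    have hpow : (F g) ^ (orderOf g) = 1 := (hpowone g _).mp (pow_orderOf_eq_one g)
    rcases pow4_or_pow6 (F g) (hdet g) hn hpow with h | h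
    · exact Or.inl (orderOf_dvd_iff_pow_eq_one.mpr ((hpowone g 4).mpr h))
    · exact Or.inr (orderOf_dvd_iff_pow_eq_one.mpr ((hpowone g 6).mpr h))
  have hne1 : ∀ g : ↥K, g ≠ 1 → F g ≠ 1 := by
    intro g hg h
    exact hg (hFinj (h.trans (_root_.map_one F).symm))
  have hBhyp : ∀ g h : ↥K, g * g = 1 → h * h = 1 → g ≠ 1 → h ≠ 1 → g = h := by
    intro g h hg hh hgne hhne
    have hg' : F g * F g = 1 := by rw [← _root_.map_mul, hg, _root_.map_one]
    have hh' : F h * F h = 1 := by rw [← _root_.map_mul, hh, _root_.map_one]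
    have e1 := invol_eq_neg_one (F g) (hdet g) hg' (hne1 g hgne)
    have e2 := invol_eq_neg_one (F h) (hdet h) hh' (hne1 h hhne)
    exact hFinj (e1.trans e2.symm)
  have horder3 : ∀ x : ↥K, orderOf x = 3 → F x * F x = -(F x) - 1 := by
    intro x hx3
    have h3 : (F x) ^ 3 = 1 := (hpowone x 3).mp (by rw [← hx3]; exact pow_orderOf_eq_one x)
    have hne : F x ≠ 1 := hne1 x (by intro h; rw [h] at hx3; simp at hx3)
    exact order3_sq (F x) (hdet x) h3 hne
  have horder4 : ∀ u : ↥K, orderOf u = 4 → F u * F u = -1 := by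
    intro u hu4
    have h4 : (F u) ^ 4 = 1 := (hpowone u 4).mp (by rw [← hu4]; exact pow_orderOf_eq_one u)
    have hsq : (F u * F u) * (F u * F u) = 1 := by rw [pow4_decomp (F u)]; exact h4
    have hne : F u * F u ≠ 1 := by
      intro h
      have h1 : u * u = 1 := by
        apply hFinj
        rw [_root_.map_mul, h, _root_.map_one]
      have h2 : orderOf u ∣ 2 := orderOf_dvd_iff_pow_eq_one.mpr (by rw [pow_two]; exact h1)
      rw [hu4] at h2
      norm_num at h2
    have hdetsq : (F u * F u).det = 1 := by
      rw [Matrix.det_mul, hdet u, mul_one]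
    exact invol_eq_neg_one _ hdetsq hsq hne
  have hChyp : ∀ x y : ↥K, orderOf x = 3 → y ^ 3 = 1 → x * y = y * x →
      y = 1 ∨ y = x ∨ y = x ^ 2 := by
    intro x y hx3 hy3 hcomm
    have hx' : psiQ (F x) * psiQ (F x) = -(psiQ (F x)) - 1 := by
      rw [← _root_.map_mul, horder3 x hx3, map_sub, map_neg, _root_.map_one]
    have hcomm' : psiQ (F x) * psiQ (F y) = psiQ (F y) * psiQ (F x) := by
      rw [← hmm, ← hmm, hcomm]
    have hy3e : y * y * y = 1 := by
      rw [← pow_two, ← pow_succ]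
      exact hy3
    have hy3' : psiQ (F y) * psiQ (F y) * psiQ (F y) = 1 := by
      rw [← hmm, ← hmm, hy3e, _root_.map_one, _root_.map_one]
    rcases comm3 _ _ hx' hcomm' hy3' with h | h | h
    · left
      apply hFinj
      apply psiQ_inj
      rw [h, _root_.map_one, _root_.map_one]
    · right; left
      exact hFinj (psiQ_inj h)
    · right; right
      apply hFinj
      apply psiQ_inj
      rw [_root_.map_pow, _root_.map_pow, pow_two]
      exact h
  have hDhyp : ∀ x y : ↥K, orderOf x = 4 → orderOf y = 4 → y * x = x⁻¹ * y → False := by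
    intro x y hx4 hy4 hrel
    have hxyx : x * y * x = y := by
      calc x * y * x = x * (y * x) := by group
        _ = x * (x⁻¹ * y) := by rw [hrel]
        _ = y := by group
    have hi : psiQ (F x) * psiQ (F x) = -1 := by
      rw [← _root_.map_mul, horder4 x hx4, map_neg, _root_.map_one]
    have hj : psiQ (F y) * psiQ (F y) = -1 := by
      rw [← _root_.map_mul, horder4 y hy4, map_neg, _root_.map_one]
    have hiji : psiQ (F x) * psiQ (F y) * psiQ (F x) = psiQ (F y) := by
      rw [← hmm, ← hmm, hxyx]
    have hanti : psiQ (F x) * psiQ (F y) = -(psiQ (F y) * psiQ (F x)) := by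
      have h1 : psiQ (F x) * (psiQ (F x) * psiQ (F y) * psiQ (F x))
          = psiQ (F x) * psiQ (F y) := by rw [hiji]
      have h2 : psiQ (F x) * (psiQ (F x) * psiQ (F y) * psiQ (F x))
          = (psiQ (F x) * psiQ (F x)) * (psiQ (F y) * psiQ (F x)) := by noncomm_ring
      rw [h2, hi] at h1
      rw [← h1]
      noncomm_ring
    exact quatContra 1 one_pos (psiQ (F x)) (psiQ (F y)) hi (by rw [one_smul]; exact hj) hanti
  have hEhyp : ∀ x u : ↥K, orderOf x = 3 → orderOf u = 4 → u * x = x ^ 2 * u → False := by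
    intro x u hx3 hu4 hrel
    have hx' : psiQ (F x) * psiQ (F x) = -(psiQ (F x)) - 1 := by
      rw [← _root_.map_mul, horder3 x hx3, map_sub, map_neg, _root_.map_one]
    have hii : psiQ (F u) * psiQ (F u) = -1 := by
      rw [← _root_.map_mul, horder4 u hu4, map_neg, _root_.map_one]
    have hrele : u * x = (x * x) * u := by
      rw [← pow_two]
      exact hrel
    have hrel' : psiQ (F u) * psiQ (F x) = (psiQ (F x) * psiQ (F x)) * psiQ (F u) := by
      rw [← hmm, ← hmm, ← hmm, hrele]
    set x' := psiQ (F x) with hx'def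
    set i := psiQ (F u) with hidef
    set J : M2Q := (2:ℚ) • x' + 1 with hJdef
    have hJ : J * J = -((3:ℚ) • 1) := by
      rw [hJdef]
      simp only [add_mul, mul_add, smul_mul_assoc, mul_smul_comm, smul_smul, one_mul, mul_one]
      rw [hx']
      module
    have hsum : i * J + J * i = (2:ℚ) • ((x' * x' + x' + 1) * i) := by
      rw [hJdef]
      simp only [add_mul, mul_add, smul_mul_assoc, mul_smul_comm, one_mul, mul_one]
      rw [hrel']
      module
    have hx0 : x' * x' + x' + 1 = 0 := by rw [hx']; module
    rw [hx0, zero_mul, smul_zero] at hsum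
    have hanti : i * J = -(J * i) := eq_neg_of_add_eq_zero_left hsum
    exact quatContra 3 (by norm_num) i J hii hJ hanti
  have hK6 : Nat.card ↥K ≤ 6 := card_le_six hAhyp hBhyp hChyp hDhyp hEhyp
  have hquot : Nat.card ↥H = Nat.card (↥H ⧸ K) * Nat.card ↥K :=
    Subgroup.card_eq_card_quotient_mul_card_subgroup K
  have hquot2 : Nat.card (↥H ⧸ K) = Nat.card φ.range :=
    Nat.card_congr (QuotientGroup.quotientKerEquivRange φ).toEquiv
  have hrange : Nat.card φ.range ≤ 2 := by
    have h1 : Nat.card φ.range ≤ Nat.card ℤˣ :=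
      Nat.card_le_card_of_injective _ Subtype.coe_injective
    have h2 : Nat.card ℤˣ = 2 := by
      rw [Nat.card_eq_fintype_card]
      rfl
    omega
  calc Nat.card ↥H = Nat.card (↥H ⧸ K) * Nat.card ↥K := hquot
    _ = Nat.card φ.range * Nat.card ↥K := by rw [hquot2]
    _ ≤ 2 * 6 := Nat.mul_le_mul hrange hK6
    _ = 12 := by norm_num

end Transfer
end

section
/- Let G = ⟨a,b | bab⁻¹ = a⁻¹⟩ and G' = ⟨α,β | βαβ⁻¹ = α⁻¹⟩ be two copies of the Klein bottle group, and let f : Ĝ → Ĝ' be an isomorphism of their profinite completions Ẑ ⋊ Ẑ. Then there exist units λ, μ ∈ Ẑ^× and θ ∈ Ẑ such that f(a) = α^μ, f(b) = α^θ β^λ, and f(b²) = β^{2λ}. In particular f maps the closure of ⟨a, b²⟩ onto the closure of ⟨α, β²⟩. -/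
/-- The inversion automorphism of `ℤ` (written multiplicatively). -/
def invAut : MulAut (Multiplicative ℤ) := MulEquiv.inv (Multiplicative ℤ)

/-- The action of `ℤ` on `ℤ` where the generator acts by inversion. -/
def kleinAct : Multiplicative ℤ →* MulAut (Multiplicative ℤ) :=
  zpowersHom (MulAut (Multiplicative ℤ)) invAut

/-- The Klein bottle group `⟨a, b ∣ b a b⁻¹ = a⁻¹⟩ ≅ ℤ ⋊ ℤ`. -/
abbrev Klein : Type := SemidirectProduct (Multiplicative ℤ) (Multiplicative ℤ) kleinAct

/-- The generator `a` of the Klein bottle group. -/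
def ka : Klein := SemidirectProduct.inl (Multiplicative.ofAdd 1)

/-- The generator `b` of the Klein bottle group. -/
def kb : Klein := SemidirectProduct.inr (Multiplicative.ofAdd 1)

/-- Reduction of `Ẑ` modulo `2`. -/
def proj2 : ZHat →+ ZMod 2 where
  toFun x := x.1 ⟨2, by norm_num⟩
  map_zero' := rfl
  map_add' x y := rfl

/-- The inversion automorphism of `Ẑ` (written multiplicatively). -/
def invAutH : MulAut (Multiplicative ZHat) := MulEquiv.inv (Multiplicative ZHat)

/-- The action of `Ẑ` on `Ẑ` which factors through `ℤ/2` acting by inversion. -/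
noncomputable def tau : Multiplicative ZHat →* MulAut (Multiplicative ZHat) :=
  AddMonoidHom.toMultiplicativeLeft
    ((ZMod.lift 2 ⟨zmultiplesHom (Additive (MulAut (Multiplicative ZHat)))
        (Additive.ofMul invAutH), by
      show (2 : ℤ) • Additive.ofMul invAutH = 0
      rw [← ofMul_zpow]
      have : invAutH ^ (2 : ℤ) = 1 := by
        refine MulEquiv.ext fun x => ?_
        show invAutH (invAutH x) = x
        show ((x⁻¹ : Multiplicative ZHat))⁻¹ = x
        exact inv_inv x
      rw [this]
      rfl⟩).comp proj2)

/-- The semidirect product `Ẑ ⋊ Ẑ`, the profinite completion of the Klein bottle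
group. -/
noncomputable abbrev ZHatSemidirect : Type :=
  SemidirectProduct (Multiplicative ZHat) (Multiplicative ZHat) tau

/-- The closure of `⟨a, b²⟩` inside `Ẑ ⋊ Ẑ`, namely the subgroup `Ẑ × 2Ẑ` of elements
whose second coordinate is even. -/
noncomputable def periphH : Subgroup ZHatSemidirect :=
  MonoidHom.ker ((AddMonoidHom.toMultiplicative proj2).comp SemidirectProduct.rightHom)


lemma coe_mul (a b : ZHat) (n : ℕ+) : (a * b).1 n = a.1 n * b.1 n := rfl
lemma coe_add (a b : ZHat) (n : ℕ+) : (a + b).1 n = a.1 n + b.1 n := rfl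
lemma coe_sub (a b : ZHat) (n : ℕ+) : (a - b).1 n = a.1 n - b.1 n := rfl
lemma coe_one (n : ℕ+) : (1 : ZHat).1 n = 1 := rfl
lemma coe_zero (n : ℕ+) : (0 : ZHat).1 n = 0 := rfl

lemma zhat_ext {a b : ZHat} (h : ∀ n, a.1 n = b.1 n) : a = b :=
  Subtype.ext (funext h)

lemma coe_natCast (m : ℕ) (n : ℕ+) : ((m : ZHat)).1 n = (m : ZMod n) := by
  induction m with
  | zero => rfl
  | succ k ih => rw [Nat.cast_succ, Nat.cast_succ, coe_add, ih, coe_one]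

instance (n : ℕ+) : NeZero (n : ℕ) := ⟨n.ne_zero⟩

lemma compat (x : ZHat) (m k : ℕ+) (h : (m:ℕ) ∣ (k:ℕ)) :
    ((x.1 k).val : ZMod m) = x.1 m := by
  have := x.2 m k h
  rwa [ZMod.castHom_apply, ← ZMod.natCast_val] at this


lemma dvd_of_comp_zero {x : ZHat} {n : ℕ+} (h : x.1 n = 0) :
    ∃ y : ZHat, ((n : ℕ) : ZHat) * y = x := by
  -- v j := val of component at n*j, divisible by n
  have hdvd : ∀ j : ℕ+, (n:ℕ) ∣ (x.1 (n*j)).val := by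
    intro j
    have h1 : (((x.1 (n*j)).val : ℕ) : ZMod n) = x.1 n :=
      compat x n (n*j) (by rw [PNat.mul_coe]; exact Dvd.intro _ rfl)
    rw [h] at h1
    exact (ZMod.natCast_eq_zero_iff _ _).mp h1
  refine ⟨⟨fun j => (((x.1 (n*j)).val / (n:ℕ) : ℕ) : ZMod j), ?_⟩, ?_⟩
  · intro m k hmk
    have hcomp : ((x.1 (n*k)).val : ZMod ((n:ℕ)*(m:ℕ))) = ((x.1 (n*m)).val : ZMod ((n:ℕ)*(m:ℕ))) := by
      have e1 : (((x.1 (n*k)).val : ℕ) : ZMod (n*m)) = x.1 (n*m) :=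
        compat x (n*m) (n*k) (by rw [PNat.mul_coe, PNat.mul_coe]; exact mul_dvd_mul_left _ hmk)
      have e2 : (((x.1 (n*m)).val : ℕ) : ZMod (n*m)) = x.1 (n*m) :=
        compat x (n*m) (n*m) dvd_rfl
      have e3 := e1.trans e2.symm
      exact e3
    have hmod : (x.1 (n*k)).val ≡ (x.1 (n*m)).val [MOD (n:ℕ)*(m:ℕ)] :=
      (ZMod.natCast_eq_natCast_iff _ _ _).mp hcomp
    have hmod2 : (x.1 (n*k)).val / (n:ℕ) ≡ (x.1 (n*m)).val / (n:ℕ) [MOD (m:ℕ)] := by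
      apply Nat.ModEq.mul_left_cancel' (n.ne_zero)
      rwa [Nat.mul_div_cancel' (hdvd k), Nat.mul_div_cancel' (hdvd m)]
    rw [ZMod.castHom_apply, ← ZMod.natCast_val, ZMod.val_natCast,
      (ZMod.natCast_eq_natCast_iff _ _ _).mpr (((Nat.mod_modEq _ _).of_dvd hmk).trans hmod2)]
  · apply zhat_ext
    intro j
    rw [coe_mul, coe_natCast]
    show ((n:ℕ) : ZMod j) * (((x.1 (n*j)).val / (n:ℕ) : ℕ) : ZMod j) = x.1 j
    rw [← Nat.cast_mul, Nat.mul_div_cancel' (hdvd j)]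
    exact compat x j (n*j) (by rw [PNat.mul_coe]; exact Dvd.intro_left _ rfl)

lemma addHom_eq_mul (φ : ZHat →+ ZHat) (c : ZHat) : φ c = φ 1 * c := by
  apply zhat_ext
  intro n
  have hv : ((c.1 n).val : ZMod n) = c.1 n := ZMod.natCast_zmod_val _
  set v : ℕ := (c.1 n).val with hvdef
  have hc0 : (c - (v : ZHat)).1 n = 0 := by
    rw [coe_sub, coe_natCast, hv, sub_self]
  obtain ⟨y, hy⟩ := dvd_of_comp_zero hc0
  have hsplit : c = (v : ZHat) + ((n:ℕ) : ZHat) * y := by rw [hy]; ring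
  have hφ : φ c = (v : ZHat) * φ 1 + ((n:ℕ):ZHat) * φ y := by
    rw [hsplit, map_add]
    congr 1
    · have h1 : ((v:ℕ):ZHat) = v • (1:ZHat) := by simp
      rw [h1, map_nsmul, smul_mul_assoc, one_mul]
    · have h2 : ((n:ℕ):ZHat) * y = (n:ℕ) • y := (nsmul_eq_mul _ _).symm
      rw [h2, map_nsmul, nsmul_eq_mul]
  rw [hφ, coe_add, coe_mul, coe_mul, coe_natCast, coe_natCast, ZMod.natCast_self,
    zero_mul, add_zero, coe_mul, hv]
  ring

lemma addEquiv_unit (φ : ZHat ≃+ ZHat) :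
    ∃ u : ZHatˣ, ∀ c, φ c = (u : ZHat) * c := by
  have h1 : ∀ c, φ c = φ 1 * c := addHom_eq_mul φ.toAddMonoidHom
  have h2 : ∀ c, φ.symm c = φ.symm 1 * c := addHom_eq_mul φ.symm.toAddMonoidHom
  have key : φ 1 * φ.symm 1 = 1 := by
    have := h1 (φ.symm 1)
    rw [φ.apply_symm_apply] at this
    exact this.symm
  exact ⟨⟨φ 1, φ.symm 1, key, by rw [mul_comm]; exact key⟩, h1⟩

lemma coe_two (k : ℕ+) : (2 : ZHat).1 k = 2 := by
  have : ((2:ℕ) : ZHat) = (2 : ZHat) := by norm_cast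
  rw [← this, coe_natCast]; norm_cast

lemma two_mul_eq_zero {y : ZHat} (h : 2 * y = 0) : y = 0 := by
  apply zhat_ext; intro n
  have h2 : (2 : ZMod (2*n : ℕ+)) * y.1 (2*n) = 0 := by
    have := congrArg (fun z : ZHat => z.1 (2*n)) h
    simpa [coe_mul, coe_two] using this
  have hv : ((2 * (y.1 (2*n)).val : ℕ) : ZMod (2*n : ℕ+)) = 0 := by
    rw [Nat.cast_mul, ZMod.natCast_zmod_val]
    rw [show ((2:ℕ) : ZMod (2*n : ℕ+)) = 2 by norm_cast]
    exact h2
  have hdv : ((2*n : ℕ+) : ℕ) ∣ 2 * (y.1 (2*n)).val :=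
    (ZMod.natCast_eq_zero_iff _ _).mp hv
  have hdv' : 2 * (n:ℕ) ∣ 2 * (y.1 (2*n)).val :=
    dvd_trans (dvd_of_eq (PNat.mul_coe 2 n).symm) hdv
  have hn : (n:ℕ) ∣ (y.1 (2*n)).val :=
    Nat.dvd_of_mul_dvd_mul_left (by norm_num) hdv'
  have := compat y n (2*n) (by rw [PNat.mul_coe]; exact Dvd.intro_left _ rfl)
  exact this.symm.trans ((ZMod.natCast_eq_zero_iff _ _).mpr hn)

lemma zhat_four_ne_zero : (4 : ZHat) ≠ 0 := by
  intro h
  have h8 : (4 : ZHat).1 ⟨8, by norm_num⟩ = 0 := by rw [h]; rfl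
  have : ((4:ℕ) : ZHat).1 ⟨8, by norm_num⟩ = 0 := by
    rw [show ((4:ℕ):ZHat) = (4:ZHat) by norm_cast]; exact h8
  have := (coe_natCast 4 ⟨8, by norm_num⟩).symm.trans this
  revert this
  decide

lemma proj2_mul (a b : ZHat) : proj2 (a * b) = proj2 a * proj2 b := rfl

lemma proj2_one : proj2 (1 : ZHat) = 1 := rfl

lemma proj2_unit (u : ZHatˣ) : proj2 (u : ZHat) = 1 := by
  have h : proj2 (u : ZHat) * proj2 ((u⁻¹ : ZHatˣ) : ZHat) = 1 := by
    rw [← proj2_mul, Units.mul_inv, proj2_one]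
  revert h
  generalize proj2 (u : ZHat) = z
  generalize proj2 ((u⁻¹ : ZHatˣ) : ZHat) = w
  revert z w
  decide

lemma invAutH_apply (z : Multiplicative ZHat) : invAutH z = z⁻¹ := rfl

lemma tau_apply_zero {y : Multiplicative ZHat} (h : proj2 y.toAdd = 0) : tau y = 1 := by
  unfold tau
  show Additive.toMul ((ZMod.lift 2 ⟨(zmultiplesHom (Additive (MulAut (Multiplicative ZHat)))) (Additive.ofMul invAutH), tau._proof_2⟩) (proj2 (Multiplicative.toAdd y))) = 1
  rw [h, map_zero]
  rfl

lemma tau_apply_one {y : Multiplicative ZHat} (h : proj2 y.toAdd = 1) : tau y = invAutH := by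
  unfold tau
  show Additive.toMul ((ZMod.lift 2 ⟨(zmultiplesHom (Additive (MulAut (Multiplicative ZHat)))) (Additive.ofMul invAutH), tau._proof_2⟩) (proj2 (Multiplicative.toAdd y))) = invAutH
  rw [h, show (1 : ZMod 2) = ((1:ℤ) : ZMod 2) by decide, ZMod.lift_coe]
  show Additive.toMul ((1:ℤ) • Additive.ofMul invAutH) = invAutH
  rw [one_zsmul]
  rfl

open SemidirectProduct Multiplicative

lemma sd_mul (a b : ZHatSemidirect) :
    a * b = ⟨a.left * tau a.right b.left, a.right * b.right⟩ := rfl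

lemma sd_inv (a : ZHatSemidirect) :
    a⁻¹ = ⟨tau a.right⁻¹ a.left⁻¹, a.right⁻¹⟩ := rfl

lemma invAutH_inv : invAutH⁻¹ = invAutH := by
  ext z; rfl

lemma invAutH_sq : invAutH * invAutH = 1 := by
  ext z : 1; show ((z⁻¹)⁻¹ : Multiplicative ZHat) = z; exact inv_inv z

lemma tau_cases (y : Multiplicative ZHat) : tau y = 1 ∨ tau y = invAutH := by
  rcases (show ∀ z : ZMod 2, z = 0 ∨ z = 1 by decide) (proj2 y.toAdd) with h | h
  · exact Or.inl (tau_apply_zero h)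
  · exact Or.inr (tau_apply_one h)

lemma rtac (g h : ZHatSemidirect) (t : ZHat) :
    (g * h * g⁻¹ * h⁻¹).right = (inl (ofAdd (2*t)) : ZHatSemidirect).right := by
  simp only [mul_right, inv_right, right_inl]
  rw [mul_comm g.right h.right]
  simp

lemma com_shape (g h : ZHatSemidirect) : ∃ t : ZHat,
    g * h * g⁻¹ * h⁻¹ = inl (ofAdd (2*t)) := by
  rcases tau_cases g.right with h1 | h1 <;> rcases tau_cases h.right with h2 | h2
  · refine ⟨0, SemidirectProduct.ext ?_ (rtac g h _)⟩
    simp only [mul_left, mul_right, inv_left, inv_right, left_inl, map_mul, map_inv,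
      h1, h2, inv_one, MulAut.one_apply, MulAut.mul_apply, mul_one, one_mul,
      invAutH_inv, invAutH_sq, invAutH_apply, mul_inv_rev, inv_inv]
    apply Multiplicative.toAdd.injective
    simp only [toAdd_mul, toAdd_inv, toAdd_ofAdd]
    ring
  · refine ⟨toAdd g.left, SemidirectProduct.ext ?_ (rtac g h _)⟩
    simp only [mul_left, mul_right, inv_left, inv_right, left_inl, map_mul, map_inv,
      h1, h2, inv_one, MulAut.one_apply, MulAut.mul_apply, mul_one, one_mul,
      invAutH_inv, invAutH_sq, invAutH_apply, mul_inv_rev, inv_inv]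
    apply Multiplicative.toAdd.injective
    simp only [toAdd_mul, toAdd_inv, toAdd_ofAdd]
    ring
  · refine ⟨-(toAdd h.left), SemidirectProduct.ext ?_ (rtac g h _)⟩
    simp only [mul_left, mul_right, inv_left, inv_right, left_inl, map_mul, map_inv,
      h1, h2, inv_one, MulAut.one_apply, MulAut.mul_apply, mul_one, one_mul,
      invAutH_inv, invAutH_sq, invAutH_apply, mul_inv_rev, inv_inv]
    apply Multiplicative.toAdd.injective
    simp only [toAdd_mul, toAdd_inv, toAdd_ofAdd]
    ring
  · refine ⟨toAdd g.left - toAdd h.left, SemidirectProduct.ext ?_ (rtac g h _)⟩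
    simp only [mul_left, mul_right, inv_left, inv_right, left_inl, map_mul, map_inv,
      h1, h2, inv_one, MulAut.one_apply, MulAut.mul_apply, mul_one, one_mul,
      invAutH_inv, invAutH_sq, invAutH_apply, mul_inv_rev, inv_inv]
    apply Multiplicative.toAdd.injective
    simp only [toAdd_mul, toAdd_inv, toAdd_ofAdd]
    ring

/-- `g` is a commutator. -/
def IsCom (g : ZHatSemidirect) : Prop := ∃ h k : ZHatSemidirect, g = h * k * h⁻¹ * k⁻¹

lemma tau_ofAdd_one : tau (ofAdd (1 : ZHat)) = invAutH := tau_apply_one proj2_one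

lemma isCom_inl (t : ZHat) : IsCom (inl (ofAdd (2*t))) := by
  refine ⟨inr (ofAdd (1:ZHat)), inl (ofAdd (-t)), ?_⟩
  apply SemidirectProduct.ext
  · simp only [mul_left, mul_right, inv_left, inv_right, left_inl, right_inl, left_inr,
      right_inr, map_mul, map_inv, map_one, tau_ofAdd_one, inv_one, MulAut.one_apply,
      MulAut.mul_apply, mul_one, one_mul, invAutH_inv, invAutH_sq, invAutH_apply,
      mul_inv_rev, inv_inv]
    apply Multiplicative.toAdd.injective
    simp only [toAdd_mul, toAdd_inv, toAdd_ofAdd]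
    ring
  · simp only [mul_right, inv_right, right_inl, right_inr, mul_one, one_mul]
    simp

lemma isCom_iff (g : ZHatSemidirect) :
    IsCom g ↔ ∃ t : ZHat, g = inl (ofAdd (2*t)) := by
  constructor
  · rintro ⟨h, k, rfl⟩
    exact com_shape h k
  · rintro ⟨t, rfl⟩
    exact isCom_inl t

/-- `g` commutes with all commutators. -/
def Per (g : ZHatSemidirect) : Prop := ∀ h, IsCom h → g * h = h * g

lemma per_iff (g : ZHatSemidirect) : Per g ↔ proj2 g.right.toAdd = 0 := by
  constructor
  · intro hp
    by_contra hne
    have h1 : proj2 g.right.toAdd = 1 := by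
      rcases (show ∀ z : ZMod 2, z = 0 ∨ z = 1 by decide) (proj2 g.right.toAdd) with h | h
      · exact absurd h hne
      · exact h
    have htau := tau_apply_one h1
    have hcomm := hp (inl (ofAdd (2*1))) (isCom_inl 1)
    have hl := congrArg SemidirectProduct.left hcomm
    simp only [mul_left, left_inl, right_inl, map_one, htau, invAutH_apply,
      MulAut.one_apply, mul_one, one_mul] at hl
    have hadd := congrArg Multiplicative.toAdd hl
    simp only [toAdd_mul, toAdd_inv, toAdd_ofAdd] at hadd
    apply zhat_four_ne_zero
    linear_combination -hadd
  · intro h0 h hc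
    obtain ⟨t, rfl⟩ := (isCom_iff h).mp hc
    have htau := tau_apply_zero h0
    apply SemidirectProduct.ext
    · simp only [mul_left, left_inl, right_inl, map_one, htau, MulAut.one_apply,
        mul_one, one_mul]
      exact mul_comm _ _
    · simp only [mul_right, right_inl, mul_one, one_mul]

/-- `g` is in the closure of `⟨a⟩`. -/
def InA (g : ZHatSemidirect) : Prop := Per g ∧ IsCom (g*g)

lemma inA_iff (g : ZHatSemidirect) : InA g ↔ g.right = 1 := by
  constructor
  · rintro ⟨hp, hc⟩
    obtain ⟨t, ht⟩ := (isCom_iff _).mp hc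
    have hr := congrArg SemidirectProduct.right ht
    simp only [mul_right, right_inl] at hr
    have h2 : (2 : ZHat) * g.right.toAdd = 0 := by
      have := congrArg Multiplicative.toAdd hr
      simp only [toAdd_mul, toAdd_one] at this
      linear_combination this
    have h0 := two_mul_eq_zero h2
    apply Multiplicative.toAdd.injective
    rw [toAdd_one]
    exact h0
  · intro h1
    constructor
    · rw [per_iff, h1]
      simp
    · rw [isCom_iff]
      refine ⟨toAdd g.left, ?_⟩
      apply SemidirectProduct.ext
      · simp only [mul_left, h1, map_one, MulAut.one_apply, left_inl]
        apply Multiplicative.toAdd.injective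
        simp only [toAdd_mul, toAdd_ofAdd]
        ring
      · simp only [mul_right, h1, right_inl, mul_one]

lemma isCom_map (F : ZHatSemidirect ≃* ZHatSemidirect) {g} (h : IsCom g) : IsCom (F g) := by
  obtain ⟨a, b, rfl⟩ := h
  exact ⟨F a, F b, by simp only [map_mul, map_inv]⟩

lemma per_map (F : ZHatSemidirect ≃* ZHatSemidirect) {g} (h : Per g) : Per (F g) := by
  intro k hk
  have h2 : IsCom (F.symm k) := isCom_map F.symm hk
  have h3 := h _ h2
  conv_lhs => rw [← F.apply_symm_apply k]
  conv_rhs => rw [← F.apply_symm_apply k]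
  rw [← map_mul, ← map_mul, h3]

lemma inA_map (F : ZHatSemidirect ≃* ZHatSemidirect) {g} (h : InA g) : InA (F g) :=
  ⟨per_map F h.1, by rw [← map_mul]; exact isCom_map F h.2⟩

lemma mem_periphH {g : ZHatSemidirect} : g ∈ periphH ↔ proj2 g.right.toAdd = 0 := by
  unfold periphH
  rw [MonoidHom.mem_ker, MonoidHom.comp_apply]
  show Multiplicative.ofAdd (proj2 (Multiplicative.toAdd (rightHom g))) = 1 ↔ _
  rw [rightHom_eq_right]
  constructor
  · intro h
    have := congrArg Multiplicative.toAdd h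
    simpa using this
  · intro h
    rw [h]
    rfl

section Main

variable (f : ZHatSemidirect ≃* ZHatSemidirect)

lemma f_inl_right (n : Multiplicative ZHat) : (f (inl n)).right = 1 := by
  have h : InA (inl n : ZHatSemidirect) := (inA_iff _).mpr (right_inl n)
  exact (inA_iff _).mp (inA_map f h)

/-- The map induced by `f` on the closure of `⟨a⟩`, additively. -/
noncomputable def philHom : ZHat →+ ZHat where
  toFun x := toAdd ((f (inl (ofAdd x))).left)
  map_zero' := by
    simp only [ofAdd_zero, map_one]
    rfl
  map_add' x y := by
    have h1 : (inl (ofAdd (x + y)) : ZHatSemidirect) = inl (ofAdd x) * inl (ofAdd y) := by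
      rw [← map_mul, ← ofAdd_add]
    show toAdd ((f (inl (ofAdd (x+y)))).left) =
      toAdd ((f (inl (ofAdd x))).left) + toAdd ((f (inl (ofAdd y))).left)
    rw [h1, map_mul, mul_left, f_inl_right, map_one, MulAut.one_apply, toAdd_mul]

lemma philHom_bij : Function.Bijective (philHom f) := by
  constructor
  · intro x y hxy
    have hleft : (f (inl (ofAdd x))).left = (f (inl (ofAdd y))).left :=
      Multiplicative.toAdd.injective hxy
    have : f (inl (ofAdd x)) = f (inl (ofAdd y)) :=
      SemidirectProduct.ext hleft (by rw [f_inl_right, f_inl_right])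
    have := f.injective this
    have := inl_injective this
    exact Multiplicative.ofAdd.injective this
  · intro z
    set w := f.symm (inl (ofAdd z)) with hw
    have hr : w.right = 1 := by
      have h : InA (inl (ofAdd z) : ZHatSemidirect) := (inA_iff _).mpr (right_inl _)
      exact (inA_iff _).mp (inA_map f.symm h)
    have hwinl : w = inl w.left := by
      conv_lhs => rw [← inl_left_mul_inr_right w]
      rw [hr]
      simp
    refine ⟨toAdd w.left, ?_⟩
    show toAdd ((f (inl (ofAdd (toAdd w.left)))).left) = z
    rw [ofAdd_toAdd, ← hwinl, hw, f.apply_symm_apply, left_inl, toAdd_ofAdd]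

/-- The map induced by `f` on the quotient by the closure of `⟨a⟩`, additively. -/
noncomputable def rhoHom : ZHat →+ ZHat where
  toFun x := toAdd ((f (inr (ofAdd x))).right)
  map_zero' := by
    simp only [ofAdd_zero, map_one]
    rfl
  map_add' x y := by
    have h1 : (inr (ofAdd (x + y)) : ZHatSemidirect) = inr (ofAdd x) * inr (ofAdd y) := by
      rw [← map_mul, ← ofAdd_add]
    show toAdd ((f (inr (ofAdd (x+y)))).right) =
      toAdd ((f (inr (ofAdd x))).right) + toAdd ((f (inr (ofAdd y))).right)
    rw [h1, map_mul, mul_right, toAdd_mul]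

lemma rhoHom_bij : Function.Bijective (rhoHom f) := by
  constructor
  · intro x y hxy
    -- reduce to the case of equal right components
    have hr : (f (inr (ofAdd x))).right = (f (inr (ofAdd y))).right :=
      Multiplicative.toAdd.injective hxy
    have hq : (f (inr (ofAdd x)) * (f (inr (ofAdd y)))⁻¹).right = 1 := by
      rw [mul_right, inv_right, hr, mul_inv_cancel]
    have hA : InA (f (inr (ofAdd x)) * (f (inr (ofAdd y)))⁻¹) := (inA_iff _).mpr hq
    have h2 : InA (inr (ofAdd x) * (inr (ofAdd y))⁻¹ : ZHatSemidirect) := by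
      have := inA_map f.symm hA
      rw [← map_inv f, ← map_mul f, f.symm_apply_apply] at this
      exact this
    have h3 : ((inr (ofAdd x) * (inr (ofAdd y))⁻¹ : ZHatSemidirect)).right = 1 :=
      (inA_iff _).mp h2
    rw [mul_right, inv_right, right_inr, right_inr] at h3
    have := congrArg Multiplicative.toAdd h3
    simp only [toAdd_mul, toAdd_inv, toAdd_ofAdd, toAdd_one] at this
    linear_combination this
  · intro z
    set w := f.symm (inr (ofAdd z)) with hw
    have hsplit : f (inl w.left) * f (inr w.right) = inr (ofAdd z) := by
      rw [← map_mul, inl_left_mul_inr_right, hw, f.apply_symm_apply]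
    have hr := congrArg SemidirectProduct.right hsplit
    rw [mul_right, f_inl_right, one_mul, right_inr] at hr
    refine ⟨toAdd w.right, ?_⟩
    show toAdd ((f (inr (ofAdd (toAdd w.right)))).right) = z
    rw [ofAdd_toAdd, hr, toAdd_ofAdd]

end Main

/-- every isomorphism `f` between (two copies of) the profinite
completion `Ẑ ⋊ Ẑ` of the Klein bottle group satisfies `f(a) = α^μ`,
`f(b) = α^θ β^λ` and `f(b²) = β^(2λ)` for some units `λ, μ ∈ Ẑˣ` and some `θ ∈ Ẑ`;
in particular `f` carries the closure of `⟨a, b²⟩` onto the closure of `⟨α, β²⟩`. -/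
theorem klein_completion_automorphism_form (f : ZHatSemidirect ≃* ZHatSemidirect) :
    ∃ (lam mu : ZHatˣ) (θ : ZHat),
      f (SemidirectProduct.inl (Multiplicative.ofAdd (1 : ZHat))) =
        SemidirectProduct.inl (Multiplicative.ofAdd ((mu : ZHat))) ∧
      f (SemidirectProduct.inr (Multiplicative.ofAdd (1 : ZHat))) =
        SemidirectProduct.inl (Multiplicative.ofAdd θ) *
          SemidirectProduct.inr (Multiplicative.ofAdd ((lam : ZHat))) ∧
      f (SemidirectProduct.inr (Multiplicative.ofAdd (2 : ZHat))) =
        SemidirectProduct.inr (Multiplicative.ofAdd (2 * (lam : ZHat))) ∧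
      Subgroup.map f.toMonoidHom periphH = periphH := by
  obtain ⟨mu, hmu⟩ := addEquiv_unit (AddEquiv.ofBijective (philHom f) (philHom_bij f))
  obtain ⟨lam, hlam⟩ := addEquiv_unit (AddEquiv.ofBijective (rhoHom f) (rhoHom_bij f))
  have hmu1 : toAdd ((f (inl (ofAdd (1:ZHat)))).left) = (mu : ZHat) := by
    have := hmu 1
    simpa [philHom] using this
  have hlam1 : toAdd ((f (inr (ofAdd (1:ZHat)))).right) = (lam : ZHat) := by
    have := hlam 1
    simpa [rhoHom] using this
  refine ⟨lam, mu, toAdd ((f (inr (ofAdd (1:ZHat)))).left), ?_, ?_, ?_, ?_⟩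
  · apply SemidirectProduct.ext
    · rw [left_inl, ← hmu1, ofAdd_toAdd]
    · rw [right_inl, f_inl_right]
  · rw [← mk_eq_inl_mul_inr]
    apply SemidirectProduct.ext
    · rw [ofAdd_toAdd]
    · show (f (inr (ofAdd (1:ZHat)))).right = ofAdd (lam : ZHat)
      rw [← hlam1, ofAdd_toAdd]
  · have hsq : (inr (ofAdd (2:ZHat)) : ZHatSemidirect) =
        inr (ofAdd (1:ZHat)) * inr (ofAdd (1:ZHat)) := by
      rw [← map_mul]
      congr 1
      rw [← ofAdd_add]
      norm_num
    rw [hsq, map_mul]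
    have hR : (f (inr (ofAdd (1:ZHat)))).right = ofAdd ((lam : ZHat)) := by
      rw [← hlam1, ofAdd_toAdd]
    have htau : tau ((f (inr (ofAdd (1:ZHat)))).right) = invAutH := by
      rw [hR]
      exact tau_apply_one (by rw [toAdd_ofAdd]; exact proj2_unit lam)
    apply SemidirectProduct.ext
    · rw [mul_left, htau, invAutH_apply, mul_inv_cancel, left_inr]
    · rw [mul_right, right_inr, hR, ← ofAdd_add, two_mul]
  · have hper : ∀ g : ZHatSemidirect, g ∈ periphH ↔ Per g := by
      intro g
      rw [mem_periphH, ← per_iff]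
    apply Subgroup.ext
    intro g
    rw [Subgroup.mem_map]
    constructor
    · rintro ⟨x, hx, rfl⟩
      rw [hper] at hx ⊢
      exact per_map f hx
    · intro hg
      refine ⟨f.symm g, ?_, f.apply_symm_apply g⟩
      rw [hper] at hg ⊢
      exact per_map f.symm hg
end
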